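/- There exists a constant C > 0 such that for every function û of class C⁴ on a neighborhood of K̂ = [−1,1]³ and every v̂ in the reference shape space P̂ = P₂(K̂) + span{ξ₁³, ξ₂³, ξ₃³, ξ₁ξ₂ξ₃}, the functional B₄ satisfies |B₄(û, v̂)| ≤ C |û|_{H⁴(K̂)} |v̂|_{H²(K̂)}. -/

import Mathlib

open MeasureTheory

/-- Partial derivative in the first variable of a curried function on `ℝ³`. -/
noncomputable def qd1 (f : ℝ → ℝ → ℝ → ℝ) : ℝ → ℝ → ℝ → ℝ :=
  fun x y z => deriv (fun t => f t y z) x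

/-- Partial derivative in the second variable of a curried function on `ℝ³`. -/
noncomputable def qd2 (f : ℝ → ℝ → ℝ → ℝ) : ℝ → ℝ → ℝ → ℝ :=
  fun x y z => deriv (fun t => f x t z) y

/-- Partial derivative in the third variable of a curried function on `ℝ³`. -/
noncomputable def qd3 (f : ℝ → ℝ → ℝ → ℝ) : ℝ → ℝ → ℝ → ℝ :=
  fun x y z => deriv (fun t => f x y t) z

/-- Membership in the shape space `P(K) = P₂(K) + span{x₁³, x₂³, x₃³, x₁x₂x₃}` of the
three-dimensional cubic Morley element. -/
def MorleyShape3 (w : ℝ → ℝ → ℝ → ℝ) : Prop :=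
  ∃ c0 c1 c2 c3 c4 c5 c6 c7 c8 c9 c10 c11 c12 c13 : ℝ, ∀ x y z : ℝ,
    w x y z = c0 + c1 * x + c2 * y + c3 * z + c4 * x ^ 2 + c5 * y ^ 2 + c6 * z ^ 2
      + c7 * (x * y) + c8 * (x * z) + c9 * (y * z)
      + c10 * x ^ 3 + c11 * y ^ 3 + c12 * z ^ 3 + c13 * (x * y * z)

/-- The `H²` seminorm of `v` on the box `[a1,b1] × [a2,b2] × [a3,b3]`, each ordering of
mixed partial derivatives counted. -/
noncomputable def semiH2Box (v : ℝ → ℝ → ℝ → ℝ) (a1 b1 a2 b2 a3 b3 : ℝ) : ℝ :=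
  Real.sqrt (∫ x in a1..b1, ∫ y in a2..b2, ∫ z in a3..b3,
    (qd1 (qd1 v) x y z) ^ 2 + (qd2 (qd2 v) x y z) ^ 2 + (qd3 (qd3 v) x y z) ^ 2
      + 2 * (qd1 (qd2 v) x y z) ^ 2 + 2 * (qd1 (qd3 v) x y z) ^ 2
      + 2 * (qd2 (qd3 v) x y z) ^ 2)

/-- The `H⁴` seminorm of `u` on the box `[a1,b1] × [a2,b2] × [a3,b3]`, each ordering of
mixed partial derivatives counted (hence the multinomial coefficients). -/
noncomputable def semiH4Box (u : ℝ → ℝ → ℝ → ℝ) (a1 b1 a2 b2 a3 b3 : ℝ) : ℝ :=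
  Real.sqrt (∫ x in a1..b1, ∫ y in a2..b2, ∫ z in a3..b3,
    (qd1 (qd1 (qd1 (qd1 u))) x y z) ^ 2 + (qd2 (qd2 (qd2 (qd2 u))) x y z) ^ 2
      + (qd3 (qd3 (qd3 (qd3 u))) x y z) ^ 2
      + 4 * (qd1 (qd1 (qd1 (qd2 u))) x y z) ^ 2
      + 4 * (qd1 (qd1 (qd1 (qd3 u))) x y z) ^ 2
      + 4 * (qd1 (qd2 (qd2 (qd2 u))) x y z) ^ 2
      + 4 * (qd2 (qd2 (qd2 (qd3 u))) x y z) ^ 2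
      + 4 * (qd1 (qd3 (qd3 (qd3 u))) x y z) ^ 2
      + 4 * (qd2 (qd3 (qd3 (qd3 u))) x y z) ^ 2
      + 6 * (qd1 (qd1 (qd2 (qd2 u))) x y z) ^ 2
      + 6 * (qd1 (qd1 (qd3 (qd3 u))) x y z) ^ 2
      + 6 * (qd2 (qd2 (qd3 (qd3 u))) x y z) ^ 2
      + 12 * (qd1 (qd1 (qd2 (qd3 u))) x y z) ^ 2
      + 12 * (qd1 (qd2 (qd2 (qd3 u))) x y z) ^ 2
      + 12 * (qd1 (qd2 (qd3 (qd3 u))) x y z) ^ 2)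

/-- `u` is of class `C⁴` on a neighborhood of the box `[a1,b1] × [a2,b2] × [a3,b3]`. -/
def C4Near3 (u : ℝ → ℝ → ℝ → ℝ) (a1 b1 a2 b2 a3 b3 : ℝ) : Prop :=
  ∃ U : Set (ℝ × ℝ × ℝ), IsOpen U ∧
    Set.Icc a1 b1 ×ˢ (Set.Icc a2 b2 ×ˢ Set.Icc a3 b3) ⊆ U ∧
    ContDiffOn ℝ 4 (fun p : ℝ × ℝ × ℝ => u p.1 p.2.1 p.2.2) U

/-- The functional `B₄` on the reference cube `[-1,1]³`. -/
noncomputable def B4 (u v : ℝ → ℝ → ℝ → ℝ) : ℝ :=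
  (1 / 3) * (∫ x in (-1:ℝ)..1, ∫ y in (-1:ℝ)..1, ∫ z in (-1:ℝ)..1,
      (qd1 (qd2 (qd2 u)) x y z + qd1 (qd3 (qd3 u)) x y z) * qd1 (qd1 (qd1 v)) x y z
        + (qd1 (qd1 (qd2 u)) x y z + qd2 (qd3 (qd3 u)) x y z) * qd2 (qd2 (qd2 v)) x y z
        + (qd1 (qd1 (qd3 u)) x y z + qd2 (qd2 (qd3 u)) x y z) * qd3 (qd3 (qd3 v)) x y z)
    - (1 / 12) * (∫ x in (-1:ℝ)..1, ∫ y in (-1:ℝ)..1, ∫ z in (-1:ℝ)..1,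
      (∫ s in (-1:ℝ)..1, ∫ t in (-1:ℝ)..1,
              qd1 (qd2 (qd2 u)) 1 s t + qd1 (qd3 (qd3 u)) 1 s t)
          * qd1 (qd1 (qd1 v)) x y z
        + (∫ s in (-1:ℝ)..1, ∫ t in (-1:ℝ)..1,
              qd1 (qd1 (qd2 u)) s 1 t + qd2 (qd3 (qd3 u)) s 1 t)
          * qd2 (qd2 (qd2 v)) x y z
        + (∫ s in (-1:ℝ)..1, ∫ t in (-1:ℝ)..1,
              qd1 (qd1 (qd3 u)) s t 1 + qd2 (qd2 (qd3 u)) s t 1)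
          * qd3 (qd3 (qd3 v)) x y z)


open intervalIntegral

noncomputable def D1 (W : ℝ × ℝ × ℝ → ℝ) : ℝ × ℝ × ℝ → ℝ := fun p => fderiv ℝ W p (1, 0, 0)
noncomputable def D2 (W : ℝ × ℝ × ℝ → ℝ) : ℝ × ℝ × ℝ → ℝ := fun p => fderiv ℝ W p (0, 1, 0)
noncomputable def D3 (W : ℝ × ℝ × ℝ → ℝ) : ℝ × ℝ × ℝ → ℝ := fun p => fderiv ℝ W p (0, 0, 1)

variable {U : Set (ℝ × ℝ × ℝ)} {W : ℝ × ℝ × ℝ → ℝ} {n m : WithTop ℕ∞}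

theorem lineD1 (hU : IsOpen U) (hW : ContDiffOn ℝ n W U) (hn : 1 ≤ n) {x y z : ℝ}
    (hp : (x, y, z) ∈ U) : HasDerivAt (fun t => W (t, y, z)) (D1 W (x, y, z)) x := by
  have hd : DifferentiableAt ℝ W (x, y, z) :=
    (hW.differentiableOn (zero_lt_one.trans_le hn).ne').differentiableAt (hU.mem_nhds hp)
  exact hd.hasFDerivAt.comp_hasDerivAt x
    ((hasDerivAt_id x).prodMk ((hasDerivAt_const x y).prodMk (hasDerivAt_const x z)))

theorem lineD2 (hU : IsOpen U) (hW : ContDiffOn ℝ n W U) (hn : 1 ≤ n) {x y z : ℝ}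
    (hp : (x, y, z) ∈ U) : HasDerivAt (fun t => W (x, t, z)) (D2 W (x, y, z)) y := by
  have hd : DifferentiableAt ℝ W (x, y, z) :=
    (hW.differentiableOn (zero_lt_one.trans_le hn).ne').differentiableAt (hU.mem_nhds hp)
  exact hd.hasFDerivAt.comp_hasDerivAt y
    ((hasDerivAt_const y x).prodMk ((hasDerivAt_id y).prodMk (hasDerivAt_const y z)))

theorem lineD3 (hU : IsOpen U) (hW : ContDiffOn ℝ n W U) (hn : 1 ≤ n) {x y z : ℝ}
    (hp : (x, y, z) ∈ U) : HasDerivAt (fun t => W (x, y, t)) (D3 W (x, y, z)) z := by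
  have hd : DifferentiableAt ℝ W (x, y, z) :=
    (hW.differentiableOn (zero_lt_one.trans_le hn).ne').differentiableAt (hU.mem_nhds hp)
  exact hd.hasFDerivAt.comp_hasDerivAt z
    ((hasDerivAt_const z x).prodMk ((hasDerivAt_const z y).prodMk (hasDerivAt_id z)))

theorem smoothD1 (hU : IsOpen U) (hW : ContDiffOn ℝ n W U) (hmn : m + 1 ≤ n) :
    ContDiffOn ℝ m (D1 W) U := (hW.fderiv_of_isOpen hU hmn).clm_apply contDiffOn_const
theorem smoothD2 (hU : IsOpen U) (hW : ContDiffOn ℝ n W U) (hmn : m + 1 ≤ n) :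
    ContDiffOn ℝ m (D2 W) U := (hW.fderiv_of_isOpen hU hmn).clm_apply contDiffOn_const
theorem smoothD3 (hU : IsOpen U) (hW : ContDiffOn ℝ n W U) (hmn : m + 1 ≤ n) :
    ContDiffOn ℝ m (D3 W) U := (hW.fderiv_of_isOpen hU hmn).clm_apply contDiffOn_const

/-- locality lemma: functions agreeing near x have the same deriv -/
theorem ev1 (hU : IsOpen U) {g : ℝ → ℝ → ℝ → ℝ} (hg : ∀ x y z, (x, y, z) ∈ U → g x y z = W (x, y, z))
    {x y z : ℝ} (hp : (x, y, z) ∈ U) :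
    (fun t => g t y z) =ᶠ[nhds x] (fun t => W (t, y, z)) := by
  have ho : IsOpen {t : ℝ | (t, y, z) ∈ U} :=
    hU.preimage (by continuity : Continuous fun t : ℝ => ((t, y, z) : ℝ × ℝ × ℝ))
  filter_upwards [ho.mem_nhds hp] with t ht using hg t y z ht

theorem ev2 (hU : IsOpen U) {g : ℝ → ℝ → ℝ → ℝ} (hg : ∀ x y z, (x, y, z) ∈ U → g x y z = W (x, y, z))
    {x y z : ℝ} (hp : (x, y, z) ∈ U) :
    (fun t => g x t z) =ᶠ[nhds y] (fun t => W (x, t, z)) := by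
  have ho : IsOpen {t : ℝ | (x, t, z) ∈ U} :=
    hU.preimage (by continuity : Continuous fun t : ℝ => ((x, t, z) : ℝ × ℝ × ℝ))
  filter_upwards [ho.mem_nhds hp] with t ht using hg x t z ht

theorem ev3 (hU : IsOpen U) {g : ℝ → ℝ → ℝ → ℝ} (hg : ∀ x y z, (x, y, z) ∈ U → g x y z = W (x, y, z))
    {x y z : ℝ} (hp : (x, y, z) ∈ U) :
    (fun t => g x y t) =ᶠ[nhds z] (fun t => W (x, y, t)) := by
  have ho : IsOpen {t : ℝ | (x, y, t) ∈ U} :=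
    hU.preimage (by continuity : Continuous fun t : ℝ => ((x, y, t) : ℝ × ℝ × ℝ))
  filter_upwards [ho.mem_nhds hp] with t ht using hg x y t ht

theorem qd1_eq (hU : IsOpen U) (hW : ContDiffOn ℝ n W U) (hn : 1 ≤ n) {g : ℝ → ℝ → ℝ → ℝ}
    (hg : ∀ x y z, (x, y, z) ∈ U → g x y z = W (x, y, z)) :
    ∀ x y z, (x, y, z) ∈ U → qd1 g x y z = D1 W (x, y, z) := fun x y z hp => by
  have := ((lineD1 hU hW hn hp).congr_of_eventuallyEq (ev1 hU hg hp))
  exact this.deriv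

theorem qd2_eq (hU : IsOpen U) (hW : ContDiffOn ℝ n W U) (hn : 1 ≤ n) {g : ℝ → ℝ → ℝ → ℝ}
    (hg : ∀ x y z, (x, y, z) ∈ U → g x y z = W (x, y, z)) :
    ∀ x y z, (x, y, z) ∈ U → qd2 g x y z = D2 W (x, y, z) := fun x y z hp => by
  exact ((lineD2 hU hW hn hp).congr_of_eventuallyEq (ev2 hU hg hp)).deriv

theorem qd3_eq (hU : IsOpen U) (hW : ContDiffOn ℝ n W U) (hn : 1 ≤ n) {g : ℝ → ℝ → ℝ → ℝ}
    (hg : ∀ x y z, (x, y, z) ∈ U → g x y z = W (x, y, z)) :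
    ∀ x y z, (x, y, z) ∈ U → qd3 g x y z = D3 W (x, y, z) := fun x y z hp => by
  exact ((lineD3 hU hW hn hp).congr_of_eventuallyEq (ev3 hU hg hp)).deriv

/-- HasDerivAt form for FTC -/
theorem hasDeriv_qd1 (hU : IsOpen U) (hW : ContDiffOn ℝ n W U) (hn : 1 ≤ n) {g : ℝ → ℝ → ℝ → ℝ}
    (hg : ∀ x y z, (x, y, z) ∈ U → g x y z = W (x, y, z)) {x y z : ℝ} (hp : (x, y, z) ∈ U) :
    HasDerivAt (fun t => g t y z) (D1 W (x, y, z)) x :=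
  (lineD1 hU hW hn hp).congr_of_eventuallyEq (ev1 hU hg hp)

theorem hasDeriv_qd2 (hU : IsOpen U) (hW : ContDiffOn ℝ n W U) (hn : 1 ≤ n) {g : ℝ → ℝ → ℝ → ℝ}
    (hg : ∀ x y z, (x, y, z) ∈ U → g x y z = W (x, y, z)) {x y z : ℝ} (hp : (x, y, z) ∈ U) :
    HasDerivAt (fun t => g x t z) (D2 W (x, y, z)) y :=
  (lineD2 hU hW hn hp).congr_of_eventuallyEq (ev2 hU hg hp)

theorem hasDeriv_qd3 (hU : IsOpen U) (hW : ContDiffOn ℝ n W U) (hn : 1 ≤ n) {g : ℝ → ℝ → ℝ → ℝ}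
    (hg : ∀ x y z, (x, y, z) ∈ U → g x y z = W (x, y, z)) {x y z : ℝ} (hp : (x, y, z) ∈ U) :
    HasDerivAt (fun t => g x y t) (D3 W (x, y, z)) z :=
  (lineD3 hU hW hn hp).congr_of_eventuallyEq (ev3 hU hg hp)

/-- Schwarz symmetry -/
theorem pairSwap (hU : IsOpen U) (hW : ContDiffOn ℝ n W U) (hn : 2 ≤ n) {p : ℝ × ℝ × ℝ}
    (hp : p ∈ U) (v w : ℝ × ℝ × ℝ) :
    fderiv ℝ (fun q => fderiv ℝ W q v) p w = fderiv ℝ (fun q => fderiv ℝ W q w) p v := by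
  have h1 : (1 : WithTop ℕ∞) ≤ n := le_trans (by norm_num) hn
  have hf : ∀ᶠ q in nhds p, HasFDerivAt W (fderiv ℝ W q) q := by
    filter_upwards [hU.mem_nhds hp] with q hq using
      ((hW.differentiableOn (zero_lt_one.trans_le h1).ne').differentiableAt (hU.mem_nhds hq)).hasFDerivAt
  have hC1 : ContDiffOn ℝ 1 (fderiv ℝ W) U := hW.fderiv_of_isOpen hU (by exact_mod_cast hn)
  have hx : HasFDerivAt (fderiv ℝ W) (fderiv ℝ (fderiv ℝ W) p) p :=
    ((hC1.differentiableOn one_ne_zero).differentiableAt (hU.mem_nhds hp)).hasFDerivAt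
  have hsym := second_derivative_symmetric_of_eventually hf hx v w
  have hv : HasFDerivAt (fun q => fderiv ℝ W q v)
      ((ContinuousLinearMap.apply ℝ ℝ v).comp (fderiv ℝ (fderiv ℝ W) p)) p :=
    (ContinuousLinearMap.apply ℝ ℝ v).hasFDerivAt.comp p hx
  have hw : HasFDerivAt (fun q => fderiv ℝ W q w)
      ((ContinuousLinearMap.apply ℝ ℝ w).comp (fderiv ℝ (fderiv ℝ W) p)) p :=
    (ContinuousLinearMap.apply ℝ ℝ w).hasFDerivAt.comp p hx
  rw [hv.fderiv, hw.fderiv]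
  simpa using hsym.symm

theorem swapD12 (hU : IsOpen U) (hW : ContDiffOn ℝ n W U) (hn : 2 ≤ n) {p : ℝ × ℝ × ℝ}
    (hp : p ∈ U) : D1 (D2 W) p = D2 (D1 W) p :=
  pairSwap hU hW hn hp _ _
theorem swapD13 (hU : IsOpen U) (hW : ContDiffOn ℝ n W U) (hn : 2 ≤ n) {p : ℝ × ℝ × ℝ}
    (hp : p ∈ U) : D1 (D3 W) p = D3 (D1 W) p :=
  pairSwap hU hW hn hp _ _
theorem swapD23 (hU : IsOpen U) (hW : ContDiffOn ℝ n W U) (hn : 2 ≤ n) {p : ℝ × ℝ × ℝ}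
    (hp : p ∈ U) : D2 (D3 W) p = D3 (D2 W) p :=
  pairSwap hU hW hn hp _ _

noncomputable def I3 (F : ℝ × ℝ × ℝ → ℝ) : ℝ :=
  ∫ x in (-1:ℝ)..1, ∫ y in (-1:ℝ)..1, ∫ z in (-1:ℝ)..1, F (x, y, z)

def Box : Set (ℝ × ℝ × ℝ) := Set.Icc (-1) 1 ×ˢ Set.Icc (-1) 1 ×ˢ Set.Icc (-1) 1

theorem mem_Box {x y z : ℝ} : (x, y, z) ∈ Box ↔ x ∈ Set.Icc (-1:ℝ) 1 ∧ y ∈ Set.Icc (-1:ℝ) 1 ∧ z ∈ Set.Icc (-1:ℝ) 1 :=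
  Iff.rfl

theorem cont23 {F : ℝ × ℝ × ℝ → ℝ} (hF : Continuous F) :
    Continuous fun p : ℝ × ℝ => ∫ z in (-1:ℝ)..1, F (p.1, p.2, z) := by
  apply continuous_parametric_intervalIntegral_of_continuous' (μ := volume)
    (f := fun (p : ℝ × ℝ) (z : ℝ) => F (p.1, p.2, z))
  exact hF.comp (by fun_prop)

theorem cont3 {F : ℝ × ℝ × ℝ → ℝ} (hF : Continuous F) :
    Continuous fun x : ℝ => ∫ y in (-1:ℝ)..1, ∫ z in (-1:ℝ)..1, F (x, y, z) := by
  apply continuous_parametric_intervalIntegral_of_continuous' (μ := volume)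
    (f := fun (x : ℝ) (y : ℝ) => ∫ z in (-1:ℝ)..1, F (x, y, z))
  exact (cont23 hF).comp (by fun_prop)

theorem contInner2 {F : ℝ × ℝ × ℝ → ℝ} (hF : Continuous F) {x : ℝ} :
    Continuous fun y : ℝ => ∫ z in (-1:ℝ)..1, F (x, y, z) := by
  have := (cont23 hF).comp (Continuous.prodMk_right x)
  exact this

theorem I3_congr {F G : ℝ × ℝ × ℝ → ℝ} (h : ∀ p ∈ Box, F p = G p) : I3 F = I3 G := by
  unfold I3
  apply integral_congr
  intro x hx
  rw [Set.uIcc_of_le (by norm_num : (-1:ℝ) ≤ 1)] at hx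
  apply integral_congr
  intro y hy
  rw [Set.uIcc_of_le (by norm_num : (-1:ℝ) ≤ 1)] at hy
  apply integral_congr
  intro z hz
  rw [Set.uIcc_of_le (by norm_num : (-1:ℝ) ≤ 1)] at hz
  exact h (x, y, z) (mem_Box.2 ⟨hx, hy, hz⟩)

theorem I3_mono {F G : ℝ × ℝ × ℝ → ℝ} (hF : Continuous F) (hG : Continuous G)
    (h : ∀ p ∈ Box, F p ≤ G p) : I3 F ≤ I3 G := by
  unfold I3
  apply integral_mono_on (by norm_num) ((cont3 hF).intervalIntegrable _ _)
    ((cont3 hG).intervalIntegrable _ _)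
  intro x hx
  apply integral_mono_on (by norm_num) ((contInner2 hF).intervalIntegrable _ _)
    ((contInner2 hG).intervalIntegrable _ _)
  intro y hy
  apply integral_mono_on (by norm_num) ((by fun_prop : Continuous fun z => F (x,y,z)).intervalIntegrable _ _)
    ((by fun_prop : Continuous fun z => G (x,y,z)).intervalIntegrable _ _)
  intro z hz
  exact h (x, y, z) (mem_Box.2 ⟨hx, hy, hz⟩)

theorem I3_nonneg {F : ℝ × ℝ × ℝ → ℝ} (h : ∀ p ∈ Box, 0 ≤ F p) : 0 ≤ I3 F := by
  unfold I3
  apply intervalIntegral.integral_nonneg (by norm_num)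
  intro x hx
  apply intervalIntegral.integral_nonneg (by norm_num)
  intro y hy
  apply intervalIntegral.integral_nonneg (by norm_num)
  intro z hz
  exact h (x, y, z) (mem_Box.2 ⟨hx, hy, hz⟩)

theorem abs_I3_le {F : ℝ × ℝ × ℝ → ℝ} (hF : Continuous F) :
    |I3 F| ≤ I3 (fun p => |F p|) := by
  unfold I3
  refine le_trans (abs_integral_le_integral_abs (by norm_num)) ?_
  apply integral_mono_on (by norm_num) ((cont3 hF).abs.intervalIntegrable _ _)
    ((cont3 hF.abs).intervalIntegrable _ _)
  intro x hx
  refine le_trans (abs_integral_le_integral_abs (by norm_num)) ?_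
  apply integral_mono_on (by norm_num) ((contInner2 hF).abs.intervalIntegrable _ _)
    ((contInner2 hF.abs).intervalIntegrable _ _)
  intro y hy
  exact abs_integral_le_integral_abs (by norm_num)

theorem I3_add {F G : ℝ × ℝ × ℝ → ℝ} (hF : Continuous F) (hG : Continuous G) :
    I3 (fun p => F p + G p) = I3 F + I3 G := by
  unfold I3
  rw [← integral_add ((cont3 hF).intervalIntegrable _ _) ((cont3 hG).intervalIntegrable _ _)]
  apply integral_congr; intro x _
  dsimp only
  rw [← integral_add ((contInner2 hF).intervalIntegrable _ _) ((contInner2 hG).intervalIntegrable _ _)]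
  apply integral_congr; intro y _
  dsimp only
  rw [← integral_add ((by fun_prop : Continuous fun z => F (x,y,z)).intervalIntegrable _ _)
    ((by fun_prop : Continuous fun z => G (x,y,z)).intervalIntegrable _ _)]

theorem I3_mul_const {F : ℝ × ℝ × ℝ → ℝ} {c : ℝ} :
    I3 (fun p => F p * c) = (I3 F) * c := by
  unfold I3
  simp_rw [intervalIntegral.integral_mul_const]

theorem I3_const {c : ℝ} : I3 (fun _ => c) = 8 * c := by
  unfold I3
  simp
  ring

theorem swapII {F : ℝ → ℝ → ℝ} (hF : Continuous (Function.uncurry F)) :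
    (∫ x in (-1:ℝ)..1, ∫ y in (-1:ℝ)..1, F x y)
      = ∫ y in (-1:ℝ)..1, ∫ x in (-1:ℝ)..1, F x y := by
  have h1 : (-1:ℝ) ≤ 1 := by norm_num
  have hint : Integrable (Function.uncurry F)
      ((volume.restrict (Set.Ioc (-1:ℝ) 1)).prod (volume.restrict (Set.Ioc (-1:ℝ) 1))) := by
    rw [Measure.prod_restrict]
    exact (hF.continuousOn.integrableOn_compact (isCompact_Icc.prod isCompact_Icc)).mono_set
      (Set.prod_mono Set.Ioc_subset_Icc_self Set.Ioc_subset_Icc_self)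
  simp_rw [integral_of_le h1]
  exact MeasureTheory.integral_integral_swap hint

theorem CS1 {φ : ℝ → ℝ} (hφ : Continuous φ) :
    (∫ x in (-1:ℝ)..1, φ x) ^ 2 ≤ 2 * ∫ x in (-1:ℝ)..1, (φ x) ^ 2 := by
  set m : ℝ := (∫ x in (-1:ℝ)..1, φ x) / 2 with hm
  have h0 : 0 ≤ ∫ x in (-1:ℝ)..1, (φ x - m) ^ 2 :=
    intervalIntegral.integral_nonneg (by norm_num) (fun x _ => sq_nonneg _)
  have hexp : ∫ x in (-1:ℝ)..1, (φ x - m) ^ 2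
      = (∫ x in (-1:ℝ)..1, (φ x) ^ 2) - 2 * m * (∫ x in (-1:ℝ)..1, φ x) + 2 * m ^ 2 := by
    have : ∀ x : ℝ, (φ x - m) ^ 2 = (φ x) ^ 2 - 2 * m * φ x + m ^ 2 := by intro x; ring
    simp_rw [this]
    rw [intervalIntegral.integral_add ((by fun_prop : Continuous fun x => φ x ^ 2 - 2 * m * φ x).intervalIntegrable _ _) ((by fun_prop : Continuous fun _ : ℝ => m ^ 2).intervalIntegrable _ _),
      intervalIntegral.integral_sub ((by fun_prop : Continuous fun x => φ x ^ 2).intervalIntegrable _ _) ((by fun_prop : Continuous fun x => 2 * m * φ x).intervalIntegrable _ _),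
      intervalIntegral.integral_const_mul, intervalIntegral.integral_const]
    simp only [smul_eq_mul]
    ring
  rw [hexp] at h0
  nlinarith [sq_nonneg m]

theorem CS3 {F : ℝ × ℝ × ℝ → ℝ} (hF : Continuous F) :
    (I3 F) ^ 2 ≤ 8 * I3 (fun p => F p ^ 2) := by
  have hF2 : Continuous fun p : ℝ × ℝ × ℝ => F p ^ 2 := by fun_prop
  have hy : ∀ x : ℝ,
      (∫ y in (-1:ℝ)..1, ∫ z in (-1:ℝ)..1, F (x, y, z)) ^ 2
        ≤ 4 * ∫ y in (-1:ℝ)..1, ∫ z in (-1:ℝ)..1, F (x, y, z) ^ 2 := by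
    intro x
    have h1 := CS1 (contInner2 hF (x := x))
    have h2 : (∫ y in (-1:ℝ)..1, (∫ z in (-1:ℝ)..1, F (x, y, z)) ^ 2)
        ≤ ∫ y in (-1:ℝ)..1, 2 * ∫ z in (-1:ℝ)..1, F (x, y, z) ^ 2 := by
      apply integral_mono_on (by norm_num)
        (((contInner2 hF).pow 2).intervalIntegrable _ _)
        ((continuous_const.mul (contInner2 hF2)).intervalIntegrable _ _)
      intro y _
      exact CS1 (by fun_prop)
    rw [intervalIntegral.integral_const_mul] at h2
    nlinarith
  have houter := CS1 (cont3 hF)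
  have h3 : (∫ x in (-1:ℝ)..1, (∫ y in (-1:ℝ)..1, ∫ z in (-1:ℝ)..1, F (x, y, z)) ^ 2)
      ≤ ∫ x in (-1:ℝ)..1, 4 * ∫ y in (-1:ℝ)..1, ∫ z in (-1:ℝ)..1, F (x, y, z) ^ 2 := by
    apply integral_mono_on (by norm_num)
      (((cont3 hF).pow 2).intervalIntegrable _ _)
      ((continuous_const.mul (cont3 hF2)).intervalIntegrable _ _)
    intro x _
    exact hy x
  rw [intervalIntegral.integral_const_mul] at h3
  unfold I3
  nlinarith

theorem reorder {H : ℝ × ℝ × ℝ → ℝ} (hH : Continuous H) :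
    (∫ y in (-1:ℝ)..1, ∫ z in (-1:ℝ)..1, ∫ t in (-1:ℝ)..1, H (t, y, z)) = I3 H := by
  have step1 : ∀ y : ℝ, (∫ z in (-1:ℝ)..1, ∫ t in (-1:ℝ)..1, H (t, y, z))
      = ∫ t in (-1:ℝ)..1, ∫ z in (-1:ℝ)..1, H (t, y, z) := by
    intro y
    exact swapII (F := fun z t => H (t, y, z)) (by fun_prop)
  simp_rw [step1]
  have := swapII (F := fun y t => ∫ z in (-1:ℝ)..1, H (t, y, z)) ?_
  · exact this
  · have : Function.uncurry (fun y t => ∫ z in (-1:ℝ)..1, H (t, y, z))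
        = (fun p : ℝ × ℝ => ∫ z in (-1:ℝ)..1, H (p.1, p.2, z)) ∘ Prod.swap := by
      ext q; simp [Function.uncurry]
    rw [this]
    exact (cont23 hH).comp continuous_swap

noncomputable def cl (t : ℝ) : ℝ := max (-1) (min 1 t)
noncomputable def cl3 (p : ℝ × ℝ × ℝ) : ℝ × ℝ × ℝ := (cl p.1, cl p.2.1, cl p.2.2)

theorem cl_mem (t : ℝ) : cl t ∈ Set.Icc (-1:ℝ) 1 :=
  ⟨le_max_left _ _, max_le (by norm_num) (min_le_left _ _)⟩

theorem cl_eq {t : ℝ} (ht : t ∈ Set.Icc (-1:ℝ) 1) : cl t = t := by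
  rw [cl, min_eq_right ht.2, max_eq_right ht.1]

theorem cont_cl : Continuous cl := by unfold cl; fun_prop
theorem cont_cl3 : Continuous cl3 := by
  unfold cl3
  exact (cont_cl.comp continuous_fst).prodMk ((cont_cl.comp (continuous_fst.comp continuous_snd)).prodMk (cont_cl.comp (continuous_snd.comp continuous_snd)))

theorem cl3_mem (p : ℝ × ℝ × ℝ) : cl3 p ∈ Box :=
  ⟨cl_mem _, cl_mem _, cl_mem _⟩

theorem cl3_eq {p : ℝ × ℝ × ℝ} (hp : p ∈ Box) : cl3 p = p := by
  obtain ⟨h1, h2, h3⟩ := hp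
  show (cl p.1, cl p.2.1, cl p.2.2) = p
  rw [cl_eq h1, cl_eq h2, cl_eq h3]

theorem clamp_cont {P : ℝ × ℝ × ℝ → ℝ} {U : Set (ℝ × ℝ × ℝ)} (hP : ContinuousOn P U)
    (hBU : Box ⊆ U) : Continuous (fun p => P (cl3 p)) :=
  (hP.mono hBU).comp_continuous cont_cl3 cl3_mem

theorem I3_indep1 {g : ℝ × ℝ → ℝ} : I3 (fun p => g (p.2.1, p.2.2))
    = 2 * ∫ y in (-1:ℝ)..1, ∫ z in (-1:ℝ)..1, g (y, z) := by
  unfold I3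
  dsimp only
  rw [intervalIntegral.integral_const]
  norm_num

theorem I3_indep2 {g : ℝ × ℝ → ℝ} : I3 (fun p => g (p.1, p.2.2))
    = 2 * ∫ x in (-1:ℝ)..1, ∫ z in (-1:ℝ)..1, g (x, z) := by
  unfold I3
  dsimp only
  simp_rw [intervalIntegral.integral_const, sub_neg_eq_add, smul_eq_mul]
  rw [intervalIntegral.integral_const_mul]
  norm_num

theorem I3_indep3 {g : ℝ × ℝ → ℝ} : I3 (fun p => g (p.1, p.2.1))
    = 2 * ∫ x in (-1:ℝ)..1, ∫ y in (-1:ℝ)..1, g (x, y) := by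
  unfold I3
  dsimp only
  simp_rw [intervalIntegral.integral_const, sub_neg_eq_add, smul_eq_mul,
    intervalIntegral.integral_const_mul]
  norm_num

theorem I3_sub {F G : ℝ × ℝ × ℝ → ℝ} (hF : Continuous F) (hG : Continuous G) :
    I3 (fun p => F p - G p) = I3 F - I3 G := by
  have := I3_add (F := F) (G := fun p => -G p) hF hG.neg
  have hneg : I3 (fun p => -G p) = -I3 G := by
    unfold I3
    simp_rw [intervalIntegral.integral_neg]
  simp only [sub_eq_add_neg]
  rw [this, hneg]

theorem reorder2 {H : ℝ × ℝ × ℝ → ℝ} (hH : Continuous H) :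
    (∫ x in (-1:ℝ)..1, ∫ z in (-1:ℝ)..1, ∫ t in (-1:ℝ)..1, H (x, t, z)) = I3 H := by
  have step1 : ∀ x : ℝ, (∫ z in (-1:ℝ)..1, ∫ t in (-1:ℝ)..1, H (x, t, z))
      = ∫ t in (-1:ℝ)..1, ∫ z in (-1:ℝ)..1, H (x, t, z) := by
    intro x
    exact swapII (F := fun z t => H (x, t, z)) (by fun_prop)
  simp_rw [step1]
  rfl

/-- FTC along the first coordinate for the clamped function. -/
theorem ftc1 {U : Set (ℝ × ℝ × ℝ)} (hU : IsOpen U) (hBU : Box ⊆ U) {A : ℝ × ℝ × ℝ → ℝ}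
    {n : WithTop ℕ∞} (hA : ContDiffOn ℝ n A U) (hn : 1 ≤ n) {x y z : ℝ}
    (hx : x ∈ Set.Icc (-1:ℝ) 1) (hy : y ∈ Set.Icc (-1:ℝ) 1) (hz : z ∈ Set.Icc (-1:ℝ) 1) :
    ∫ t in x..1, D1 A (cl3 (t, y, z)) = A (cl3 (1, y, z)) - A (cl3 (x, y, z)) := by
  have hD1c : Continuous fun t : ℝ => D1 A (cl3 (t, y, z)) :=
    (clamp_cont (smoothD1 (m := 0) hU hA (by simpa using hn)).continuousOn hBU).comp (by fun_prop)
  have hAc : Continuous fun t : ℝ => A (cl3 (t, y, z)) :=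
    (clamp_cont hA.continuousOn hBU).comp (by fun_prop)
  apply integral_eq_sub_of_hasDeriv_right_of_le hx.2 hAc.continuousOn ?_
    (hD1c.intervalIntegrable _ _)
  intro t ht
  have ht' : t ∈ Set.Ioo (-1:ℝ) 1 := ⟨lt_of_le_of_lt hx.1 ht.1, ht.2⟩
  have hmem : (t, y, z) ∈ Box := mem_Box.2 ⟨⟨le_of_lt ht'.1, le_of_lt ht'.2⟩, hy, hz⟩
  have hev : (fun τ : ℝ => A (cl3 (τ, y, z))) =ᶠ[nhds t] fun τ : ℝ => A (τ, y, z) := by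
    filter_upwards [isOpen_Ioo.mem_nhds ht'] with τ hτ
    rw [cl3_eq (mem_Box.2 ⟨⟨le_of_lt hτ.1, le_of_lt hτ.2⟩, hy, hz⟩)]
  have hder : HasDerivAt (fun τ : ℝ => A (τ, y, z)) (D1 A (t, y, z)) t :=
    lineD1 hU hA hn (hBU hmem)
  have : HasDerivAt (fun τ : ℝ => A (cl3 (τ, y, z))) (D1 A (cl3 (t, y, z))) t := by
    rw [cl3_eq hmem]
    exact hder.congr_of_eventuallyEq hev
  exact this.hasDerivWithinAt

theorem ftc2 {U : Set (ℝ × ℝ × ℝ)} (hU : IsOpen U) (hBU : Box ⊆ U) {A : ℝ × ℝ × ℝ → ℝ}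
    {n : WithTop ℕ∞} (hA : ContDiffOn ℝ n A U) (hn : 1 ≤ n) {x y z : ℝ}
    (hx : x ∈ Set.Icc (-1:ℝ) 1) (hy : y ∈ Set.Icc (-1:ℝ) 1) (hz : z ∈ Set.Icc (-1:ℝ) 1) :
    ∫ t in y..1, D2 A (cl3 (x, t, z)) = A (cl3 (x, 1, z)) - A (cl3 (x, y, z)) := by
  have hD2c : Continuous fun t : ℝ => D2 A (cl3 (x, t, z)) :=
    (clamp_cont (smoothD2 (m := 0) hU hA (by simpa using hn)).continuousOn hBU).comp (by fun_prop)
  have hAc : Continuous fun t : ℝ => A (cl3 (x, t, z)) :=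
    (clamp_cont hA.continuousOn hBU).comp (by fun_prop)
  apply integral_eq_sub_of_hasDeriv_right_of_le hy.2 hAc.continuousOn ?_
    (hD2c.intervalIntegrable _ _)
  intro t ht
  have ht' : t ∈ Set.Ioo (-1:ℝ) 1 := ⟨lt_of_le_of_lt hy.1 ht.1, ht.2⟩
  have hmem : (x, t, z) ∈ Box := mem_Box.2 ⟨hx, ⟨le_of_lt ht'.1, le_of_lt ht'.2⟩, hz⟩
  have hev : (fun τ : ℝ => A (cl3 (x, τ, z))) =ᶠ[nhds t] fun τ : ℝ => A (x, τ, z) := by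
    filter_upwards [isOpen_Ioo.mem_nhds ht'] with τ hτ
    rw [cl3_eq (mem_Box.2 ⟨hx, ⟨le_of_lt hτ.1, le_of_lt hτ.2⟩, hz⟩)]
  have hder : HasDerivAt (fun τ : ℝ => A (x, τ, z)) (D2 A (x, t, z)) t :=
    lineD2 hU hA hn (hBU hmem)
  have : HasDerivAt (fun τ : ℝ => A (cl3 (x, τ, z))) (D2 A (cl3 (x, t, z))) t := by
    rw [cl3_eq hmem]
    exact hder.congr_of_eventuallyEq hev
  exact this.hasDerivWithinAt

theorem ftc3 {U : Set (ℝ × ℝ × ℝ)} (hU : IsOpen U) (hBU : Box ⊆ U) {A : ℝ × ℝ × ℝ → ℝ}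
    {n : WithTop ℕ∞} (hA : ContDiffOn ℝ n A U) (hn : 1 ≤ n) {x y z : ℝ}
    (hx : x ∈ Set.Icc (-1:ℝ) 1) (hy : y ∈ Set.Icc (-1:ℝ) 1) (hz : z ∈ Set.Icc (-1:ℝ) 1) :
    ∫ t in z..1, D3 A (cl3 (x, y, t)) = A (cl3 (x, y, 1)) - A (cl3 (x, y, z)) := by
  have hD3c : Continuous fun t : ℝ => D3 A (cl3 (x, y, t)) :=
    (clamp_cont (smoothD3 (m := 0) hU hA (by simpa using hn)).continuousOn hBU).comp (by fun_prop)
  have hAc : Continuous fun t : ℝ => A (cl3 (x, y, t)) :=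
    (clamp_cont hA.continuousOn hBU).comp (by fun_prop)
  apply integral_eq_sub_of_hasDeriv_right_of_le hz.2 hAc.continuousOn ?_
    (hD3c.intervalIntegrable _ _)
  intro t ht
  have ht' : t ∈ Set.Ioo (-1:ℝ) 1 := ⟨lt_of_le_of_lt hz.1 ht.1, ht.2⟩
  have hmem : (x, y, t) ∈ Box := mem_Box.2 ⟨hx, hy, ⟨le_of_lt ht'.1, le_of_lt ht'.2⟩⟩
  have hev : (fun τ : ℝ => A (cl3 (x, y, τ))) =ᶠ[nhds t] fun τ : ℝ => A (x, y, τ) := by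
    filter_upwards [isOpen_Ioo.mem_nhds ht'] with τ hτ
    rw [cl3_eq (mem_Box.2 ⟨hx, hy, ⟨le_of_lt hτ.1, le_of_lt hτ.2⟩⟩)]
  have hder : HasDerivAt (fun τ : ℝ => A (x, y, τ)) (D3 A (x, y, t)) t :=
    lineD3 hU hA hn (hBU hmem)
  have : HasDerivAt (fun τ : ℝ => A (cl3 (x, y, τ))) (D3 A (cl3 (x, y, t))) t := by
    rw [cl3_eq hmem]
    exact hder.congr_of_eventuallyEq hev
  exact this.hasDerivWithinAt
theorem comp_bound1 {U : Set (ℝ × ℝ × ℝ)} (hU : IsOpen U) (hBU : Box ⊆ U) {A : ℝ × ℝ × ℝ → ℝ}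
    {n : WithTop ℕ∞} (hA : ContDiffOn ℝ n A U) (hn : 1 ≤ n) :
    |(1/3) * I3 (fun p => A (cl3 p))
        - (2/3) * (∫ s in (-1:ℝ)..1, ∫ t in (-1:ℝ)..1, A (cl3 (1, s, t)))|
      ≤ (2/3) * I3 (fun p => |D1 A (cl3 p)|) := by
  have hAc : Continuous fun p => A (cl3 p) := clamp_cont hA.continuousOn hBU
  have hHc : Continuous fun p => D1 A (cl3 p) :=
    clamp_cont (smoothD1 (m := 0) hU hA (by simpa using hn)).continuousOn hBU
  set K : ℝ := ∫ s in (-1:ℝ)..1, ∫ t in (-1:ℝ)..1, A (cl3 (1, s, t)) with hK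
  set Φ : ℝ × ℝ × ℝ → ℝ := fun p => ∫ t in p.1..1, D1 A (cl3 (t, p.2.1, p.2.2)) with hΦ
  have hΦc : Continuous Φ := by
    have h0 : Continuous fun p : ℝ × ℝ × ℝ =>
        ∫ t in (1:ℝ)..p.1, D1 A (cl3 (t, p.2.1, p.2.2)) := by
      apply continuous_parametric_intervalIntegral_of_continuous (μ := volume)
        (f := fun (p : ℝ × ℝ × ℝ) (t : ℝ) => D1 A (cl3 (t, p.2.1, p.2.2)))
        ?_ continuous_fst
      exact hHc.comp (by fun_prop)
    have heq : Φ = fun p => -(∫ t in (1:ℝ)..p.1, D1 A (cl3 (t, p.2.1, p.2.2))) := by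
      funext p
      rw [hΦ]
      dsimp only
      rw [intervalIntegral.integral_symm]
    rw [heq]
    exact h0.neg
  have key : ∀ p ∈ Box, A (cl3 p) = A (cl3 (1, p.2.1, p.2.2)) - Φ p := by
    rintro ⟨x, y, z⟩ hp
    obtain ⟨hx, hy, hz⟩ := mem_Box.1 hp
    have h := ftc1 hU hBU hA hn hx hy hz
    show A (cl3 (x,y,z)) = A (cl3 (1, y, z)) - ∫ t in x..1, D1 A (cl3 (t, y, z))
    linarith
  have hface : Continuous fun p : ℝ × ℝ × ℝ => A (cl3 (1, p.2.1, p.2.2)) :=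
    hAc.comp (by fun_prop)
  have split : I3 (fun p => A (cl3 p)) = 2 * K - I3 Φ := by
    rw [I3_congr key, I3_sub hface hΦc]
    congr 1
    exact I3_indep1 (g := fun q => A (cl3 (1, q.1, q.2)))
  set Ψ : ℝ × ℝ × ℝ → ℝ :=
    fun p => ∫ t in (-1:ℝ)..1, |D1 A (cl3 (t, p.2.1, p.2.2))| with hΨ
  have hΨc : Continuous Ψ := by
    have : Continuous fun q : ℝ × ℝ => ∫ t in (-1:ℝ)..1, |D1 A (cl3 (t, q.1, q.2))| := by
      apply continuous_parametric_intervalIntegral_of_continuous' (μ := volume)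
        (f := fun (q : ℝ × ℝ) (t : ℝ) => |D1 A (cl3 (t, q.1, q.2))|)
      exact (hHc.comp (by fun_prop)).abs
    exact this.comp (by fun_prop)
  have hmono : I3 (fun p => |Φ p|) ≤ I3 Ψ := by
    apply I3_mono hΦc.abs hΨc
    rintro ⟨x, y, z⟩ hp
    obtain ⟨hx, hy, hz⟩ := mem_Box.1 hp
    have h1 : |∫ t in x..1, D1 A (cl3 (t, y, z))| ≤ ∫ t in x..1, |D1 A (cl3 (t, y, z))| :=
      abs_integral_le_integral_abs hx.2
    have h2 : (∫ t in x..1, |D1 A (cl3 (t, y, z))|)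
        ≤ ∫ t in (-1:ℝ)..1, |D1 A (cl3 (t, y, z))| := by
      apply integral_mono_interval hx.1 hx.2 le_rfl
      · filter_upwards with t using abs_nonneg _
      · exact ((hHc.comp (by fun_prop : Continuous fun t : ℝ =>
          ((t, y, z) : ℝ × ℝ × ℝ))).abs.intervalIntegrable _ _)
    exact le_trans h1 h2
  have hΨval : I3 Ψ = 2 * I3 (fun p => |D1 A (cl3 p)|) := by
    have h1 := I3_indep1 (g := fun q : ℝ × ℝ => ∫ t in (-1:ℝ)..1, |D1 A (cl3 (t, q.1, q.2))|)
    have h2 := reorder (H := fun p => |D1 A (cl3 p)|) hHc.abs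
    rw [show I3 Ψ = I3 (fun p => (fun q : ℝ × ℝ => ∫ t in (-1:ℝ)..1,
      |D1 A (cl3 (t, q.1, q.2))|) (p.2.1, p.2.2)) from rfl, h1, h2]
  have habs : |I3 Φ| ≤ 2 * I3 (fun p => |D1 A (cl3 p)|) := by
    calc |I3 Φ| ≤ I3 (fun p => |Φ p|) := abs_I3_le hΦc
    _ ≤ I3 Ψ := hmono
    _ = 2 * I3 (fun p => |D1 A (cl3 p)|) := hΨval
  rw [split]
  rw [show (1/3 : ℝ) * (2 * K - I3 Φ) - 2/3 * K = -(1/3) * I3 Φ by ring]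
  rw [abs_mul]
  rw [show |(-(1/3) : ℝ)| = 1/3 by norm_num]
  linarith
theorem comp_bound2 {U : Set (ℝ × ℝ × ℝ)} (hU : IsOpen U) (hBU : Box ⊆ U) {A : ℝ × ℝ × ℝ → ℝ}
    {n : WithTop ℕ∞} (hA : ContDiffOn ℝ n A U) (hn : 1 ≤ n) :
    |(1/3) * I3 (fun p => A (cl3 p))
        - (2/3) * (∫ s in (-1:ℝ)..1, ∫ t in (-1:ℝ)..1, A (cl3 (s, 1, t)))|
      ≤ (2/3) * I3 (fun p => |D2 A (cl3 p)|) := by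
  have hAc : Continuous fun p => A (cl3 p) := clamp_cont hA.continuousOn hBU
  have hHc : Continuous fun p => D2 A (cl3 p) :=
    clamp_cont (smoothD2 (m := 0) hU hA (by simpa using hn)).continuousOn hBU
  set K : ℝ := ∫ s in (-1:ℝ)..1, ∫ t in (-1:ℝ)..1, A (cl3 (s, 1, t)) with hK
  set Φ : ℝ × ℝ × ℝ → ℝ := fun p => ∫ t in p.2.1..1, D2 A (cl3 (p.1, t, p.2.2)) with hΦ
  have hΦc : Continuous Φ := by
    have h0 : Continuous fun p : ℝ × ℝ × ℝ =>
        ∫ t in (1:ℝ)..p.2.1, D2 A (cl3 (p.1, t, p.2.2)) := by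
      apply continuous_parametric_intervalIntegral_of_continuous (μ := volume)
        (f := fun (p : ℝ × ℝ × ℝ) (t : ℝ) => D2 A (cl3 (p.1, t, p.2.2)))
        ?_ (continuous_fst.comp continuous_snd)
      exact hHc.comp (by fun_prop)
    have heq : Φ = fun p => -(∫ t in (1:ℝ)..p.2.1, D2 A (cl3 (p.1, t, p.2.2))) := by
      funext p
      rw [hΦ]
      dsimp only
      rw [intervalIntegral.integral_symm]
    rw [heq]
    exact h0.neg
  have key : ∀ p ∈ Box, A (cl3 p) = A (cl3 (p.1, 1, p.2.2)) - Φ p := by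
    rintro ⟨x, y, z⟩ hp
    obtain ⟨hx, hy, hz⟩ := mem_Box.1 hp
    have h := ftc2 hU hBU hA hn hx hy hz
    show A (cl3 (x,y,z)) = A (cl3 (x, 1, z)) - ∫ t in y..1, D2 A (cl3 (x, t, z))
    linarith
  have hface : Continuous fun p : ℝ × ℝ × ℝ => A (cl3 (p.1, 1, p.2.2)) :=
    hAc.comp (by fun_prop)
  have split : I3 (fun p => A (cl3 p)) = 2 * K - I3 Φ := by
    rw [I3_congr key, I3_sub hface hΦc]
    congr 1
    exact I3_indep2 (g := fun q => A (cl3 (q.1, 1, q.2)))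
  set Ψ : ℝ × ℝ × ℝ → ℝ :=
    fun p => ∫ t in (-1:ℝ)..1, |D2 A (cl3 (p.1, t, p.2.2))| with hΨ
  have hΨc : Continuous Ψ := by
    have : Continuous fun q : ℝ × ℝ => ∫ t in (-1:ℝ)..1, |D2 A (cl3 (q.1, t, q.2))| := by
      apply continuous_parametric_intervalIntegral_of_continuous' (μ := volume)
        (f := fun (q : ℝ × ℝ) (t : ℝ) => |D2 A (cl3 (q.1, t, q.2))|)
      exact (hHc.comp (by fun_prop)).abs
    exact this.comp (continuous_fst.prodMk (continuous_snd.comp continuous_snd))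
  have hmono : I3 (fun p => |Φ p|) ≤ I3 Ψ := by
    apply I3_mono hΦc.abs hΨc
    rintro ⟨x, y, z⟩ hp
    obtain ⟨hx, hy, hz⟩ := mem_Box.1 hp
    have h1 : |∫ t in y..1, D2 A (cl3 (x, t, z))| ≤ ∫ t in y..1, |D2 A (cl3 (x, t, z))| :=
      abs_integral_le_integral_abs hy.2
    have h2 : (∫ t in y..1, |D2 A (cl3 (x, t, z))|)
        ≤ ∫ t in (-1:ℝ)..1, |D2 A (cl3 (x, t, z))| := by
      apply integral_mono_interval hy.1 hy.2 le_rfl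
      · filter_upwards with t using abs_nonneg _
      · exact ((hHc.comp (by fun_prop : Continuous fun t : ℝ =>
          ((x, t, z) : ℝ × ℝ × ℝ))).abs.intervalIntegrable _ _)
    exact le_trans h1 h2
  have hΨval : I3 Ψ = 2 * I3 (fun p => |D2 A (cl3 p)|) := by
    have h1 := I3_indep2 (g := fun q : ℝ × ℝ => ∫ t in (-1:ℝ)..1, |D2 A (cl3 (q.1, t, q.2))|)
    have h2 := reorder2 (H := fun p => |D2 A (cl3 p)|) hHc.abs
    rw [show I3 Ψ = I3 (fun p => (fun q : ℝ × ℝ => ∫ t in (-1:ℝ)..1,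
      |D2 A (cl3 (q.1, t, q.2))|) (p.1, p.2.2)) from rfl, h1, h2]
  have habs : |I3 Φ| ≤ 2 * I3 (fun p => |D2 A (cl3 p)|) := by
    calc |I3 Φ| ≤ I3 (fun p => |Φ p|) := abs_I3_le hΦc
    _ ≤ I3 Ψ := hmono
    _ = 2 * I3 (fun p => |D2 A (cl3 p)|) := hΨval
  rw [split]
  rw [show (1/3 : ℝ) * (2 * K - I3 Φ) - 2/3 * K = -(1/3) * I3 Φ by ring]
  rw [abs_mul]
  rw [show |(-(1/3) : ℝ)| = 1/3 by norm_num]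
  linarith

theorem comp_bound3 {U : Set (ℝ × ℝ × ℝ)} (hU : IsOpen U) (hBU : Box ⊆ U) {A : ℝ × ℝ × ℝ → ℝ}
    {n : WithTop ℕ∞} (hA : ContDiffOn ℝ n A U) (hn : 1 ≤ n) :
    |(1/3) * I3 (fun p => A (cl3 p))
        - (2/3) * (∫ s in (-1:ℝ)..1, ∫ t in (-1:ℝ)..1, A (cl3 (s, t, 1)))|
      ≤ (2/3) * I3 (fun p => |D3 A (cl3 p)|) := by
  have hAc : Continuous fun p => A (cl3 p) := clamp_cont hA.continuousOn hBU
  have hHc : Continuous fun p => D3 A (cl3 p) :=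
    clamp_cont (smoothD3 (m := 0) hU hA (by simpa using hn)).continuousOn hBU
  set K : ℝ := ∫ s in (-1:ℝ)..1, ∫ t in (-1:ℝ)..1, A (cl3 (s, t, 1)) with hK
  set Φ : ℝ × ℝ × ℝ → ℝ := fun p => ∫ t in p.2.2..1, D3 A (cl3 (p.1, p.2.1, t)) with hΦ
  have hΦc : Continuous Φ := by
    have h0 : Continuous fun p : ℝ × ℝ × ℝ =>
        ∫ t in (1:ℝ)..p.2.2, D3 A (cl3 (p.1, p.2.1, t)) := by
      apply continuous_parametric_intervalIntegral_of_continuous (μ := volume)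
        (f := fun (p : ℝ × ℝ × ℝ) (t : ℝ) => D3 A (cl3 (p.1, p.2.1, t)))
        ?_ (continuous_snd.comp continuous_snd)
      exact hHc.comp (by fun_prop)
    have heq : Φ = fun p => -(∫ t in (1:ℝ)..p.2.2, D3 A (cl3 (p.1, p.2.1, t))) := by
      funext p
      rw [hΦ]
      dsimp only
      rw [intervalIntegral.integral_symm]
    rw [heq]
    exact h0.neg
  have key : ∀ p ∈ Box, A (cl3 p) = A (cl3 (p.1, p.2.1, 1)) - Φ p := by
    rintro ⟨x, y, z⟩ hp
    obtain ⟨hx, hy, hz⟩ := mem_Box.1 hp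
    have h := ftc3 hU hBU hA hn hx hy hz
    show A (cl3 (x,y,z)) = A (cl3 (x, y, 1)) - ∫ t in z..1, D3 A (cl3 (x, y, t))
    linarith
  have hface : Continuous fun p : ℝ × ℝ × ℝ => A (cl3 (p.1, p.2.1, 1)) :=
    hAc.comp (by fun_prop)
  have split : I3 (fun p => A (cl3 p)) = 2 * K - I3 Φ := by
    rw [I3_congr key, I3_sub hface hΦc]
    congr 1
    exact I3_indep3 (g := fun q => A (cl3 (q.1, q.2, 1)))
  set Ψ : ℝ × ℝ × ℝ → ℝ :=
    fun p => ∫ t in (-1:ℝ)..1, |D3 A (cl3 (p.1, p.2.1, t))| with hΨ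
  have hΨc : Continuous Ψ := by
    have : Continuous fun q : ℝ × ℝ => ∫ t in (-1:ℝ)..1, |D3 A (cl3 (q.1, q.2, t))| := by
      apply continuous_parametric_intervalIntegral_of_continuous' (μ := volume)
        (f := fun (q : ℝ × ℝ) (t : ℝ) => |D3 A (cl3 (q.1, q.2, t))|)
      exact (hHc.comp (by fun_prop)).abs
    exact this.comp (continuous_fst.prodMk (continuous_fst.comp continuous_snd))
  have hmono : I3 (fun p => |Φ p|) ≤ I3 Ψ := by
    apply I3_mono hΦc.abs hΨc
    rintro ⟨x, y, z⟩ hp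
    obtain ⟨hx, hy, hz⟩ := mem_Box.1 hp
    have h1 : |∫ t in z..1, D3 A (cl3 (x, y, t))| ≤ ∫ t in z..1, |D3 A (cl3 (x, y, t))| :=
      abs_integral_le_integral_abs hz.2
    have h2 : (∫ t in z..1, |D3 A (cl3 (x, y, t))|)
        ≤ ∫ t in (-1:ℝ)..1, |D3 A (cl3 (x, y, t))| := by
      apply integral_mono_interval hz.1 hz.2 le_rfl
      · filter_upwards with t using abs_nonneg _
      · exact ((hHc.comp (by fun_prop : Continuous fun t : ℝ =>
          ((x, y, t) : ℝ × ℝ × ℝ))).abs.intervalIntegrable _ _)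
    exact le_trans h1 h2
  have hΨval : I3 Ψ = 2 * I3 (fun p => |D3 A (cl3 p)|) := by
    have h1 := I3_indep3 (g := fun q : ℝ × ℝ => ∫ t in (-1:ℝ)..1, |D3 A (cl3 (q.1, q.2, t))|)
    rw [show I3 Ψ = I3 (fun p => (fun q : ℝ × ℝ => ∫ t in (-1:ℝ)..1,
      |D3 A (cl3 (q.1, q.2, t))|) (p.1, p.2.1)) from rfl, h1]
    rfl
  have habs : |I3 Φ| ≤ 2 * I3 (fun p => |D3 A (cl3 p)|) := by
    calc |I3 Φ| ≤ I3 (fun p => |Φ p|) := abs_I3_le hΦc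
    _ ≤ I3 Ψ := hmono
    _ = 2 * I3 (fun p => |D3 A (cl3 p)|) := hΨval
  rw [split]
  rw [show (1/3 : ℝ) * (2 * K - I3 Φ) - 2/3 * K = -(1/3) * I3 Φ by ring]
  rw [abs_mul]
  rw [show |(-(1/3) : ℝ)| = 1/3 by norm_num]
  linarith
theorem D1_congr {U : Set (ℝ × ℝ × ℝ)} (hU : IsOpen U) {F G : ℝ × ℝ × ℝ → ℝ}
    (h : ∀ q ∈ U, F q = G q) {p : ℝ × ℝ × ℝ} (hp : p ∈ U) : D1 F p = D1 G p := by
  have hev : F =ᶠ[nhds p] G := by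
    filter_upwards [hU.mem_nhds hp] with q hq using h q hq
  unfold D1
  rw [hev.fderiv_eq]

theorem D2_congr {U : Set (ℝ × ℝ × ℝ)} (hU : IsOpen U) {F G : ℝ × ℝ × ℝ → ℝ}
    (h : ∀ q ∈ U, F q = G q) {p : ℝ × ℝ × ℝ} (hp : p ∈ U) : D2 F p = D2 G p := by
  have hev : F =ᶠ[nhds p] G := by
    filter_upwards [hU.mem_nhds hp] with q hq using h q hq
  unfold D2
  rw [hev.fderiv_eq]

theorem D1_add {U : Set (ℝ × ℝ × ℝ)} (hU : IsOpen U) {F G : ℝ × ℝ × ℝ → ℝ} {n : WithTop ℕ∞}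
    (hF : ContDiffOn ℝ n F U) (hG : ContDiffOn ℝ n G U) (hn : 1 ≤ n) {p : ℝ × ℝ × ℝ}
    (hp : p ∈ U) : D1 (fun q => F q + G q) p = D1 F p + D1 G p := by
  unfold D1
  rw [fderiv_fun_add ((hF.differentiableOn (zero_lt_one.trans_le hn).ne').differentiableAt (hU.mem_nhds hp))
    ((hG.differentiableOn (zero_lt_one.trans_le hn).ne').differentiableAt (hU.mem_nhds hp))]
  rfl

theorem D2_add {U : Set (ℝ × ℝ × ℝ)} (hU : IsOpen U) {F G : ℝ × ℝ × ℝ → ℝ} {n : WithTop ℕ∞}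
    (hF : ContDiffOn ℝ n F U) (hG : ContDiffOn ℝ n G U) (hn : 1 ≤ n) {p : ℝ × ℝ × ℝ}
    (hp : p ∈ U) : D2 (fun q => F q + G q) p = D2 F p + D2 G p := by
  unfold D2
  rw [fderiv_fun_add ((hF.differentiableOn (zero_lt_one.trans_le hn).ne').differentiableAt (hU.mem_nhds hp))
    ((hG.differentiableOn (zero_lt_one.trans_le hn).ne').differentiableAt (hU.mem_nhds hp))]
  rfl

theorem D3_add {U : Set (ℝ × ℝ × ℝ)} (hU : IsOpen U) {F G : ℝ × ℝ × ℝ → ℝ} {n : WithTop ℕ∞}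
    (hF : ContDiffOn ℝ n F U) (hG : ContDiffOn ℝ n G U) (hn : 1 ≤ n) {p : ℝ × ℝ × ℝ}
    (hp : p ∈ U) : D3 (fun q => F q + G q) p = D3 F p + D3 G p := by
  unfold D3
  rw [fderiv_fun_add ((hF.differentiableOn (zero_lt_one.trans_le hn).ne').differentiableAt (hU.mem_nhds hp))
    ((hG.differentiableOn (zero_lt_one.trans_le hn).ne').differentiableAt (hU.mem_nhds hp))]
  rfl

theorem derivPoly (a b c d x : ℝ) :
    HasDerivAt (fun t : ℝ => a + b * t + c * t ^ 2 + d * t ^ 3)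
      (b + 2 * c * x + 3 * d * x ^ 2) x := by
  have h2 : HasDerivAt (fun t : ℝ => t ^ 2) (2 * x) x := by
    simpa using hasDerivAt_pow 2 x
  have h3 : HasDerivAt (fun t : ℝ => t ^ 3) (3 * x ^ 2) x := by
    simpa using hasDerivAt_pow 3 x
  have h := (((hasDerivAt_const x a).add ((hasDerivAt_id x).const_mul b)).add
    (h2.const_mul c)).add (h3.const_mul d)
  exact h.congr_deriv (by ring)

theorem int_quad (a b c : ℝ) : ∫ x in (-1:ℝ)..1, (a + b * x + c * x ^ 2) = 2 * a + (2/3) * c := by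
  have h1 : IntervalIntegrable (fun x : ℝ => a + b * x) volume (-1) 1 :=
    ((by fun_prop : Continuous fun x : ℝ => a + b * x)).intervalIntegrable _ _
  have h2 : IntervalIntegrable (fun x : ℝ => c * x ^ 2) volume (-1) 1 :=
    ((by fun_prop : Continuous fun x : ℝ => c * x ^ 2)).intervalIntegrable _ _
  have h3 : IntervalIntegrable (fun x : ℝ => b * x) volume (-1) 1 :=
    ((by fun_prop : Continuous fun x : ℝ => b * x)).intervalIntegrable _ _
  have e : (fun x : ℝ => a + b * x + c * x ^ 2) = fun x : ℝ => (a + b * x) + c * x ^ 2 := rfl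
  rw [e, integral_add h1 h2, integral_add intervalIntegrable_const h3,
    intervalIntegral.integral_const, intervalIntegral.integral_const_mul, intervalIntegral.integral_const_mul, integral_id, integral_pow]
  norm_num [mul_comm]

section Morley
variable {v : ℝ → ℝ → ℝ → ℝ} {c0 c1 c2 c3 c4 c5 c6 c7 c8 c9 c10 c11 c12 c13 : ℝ}

def MP (c0 c1 c2 c3 c4 c5 c6 c7 c8 c9 c10 c11 c12 c13 : ℝ) (x y z : ℝ) : ℝ :=
  c0 + c1 * x + c2 * y + c3 * z + c4 * x ^ 2 + c5 * y ^ 2 + c6 * z ^ 2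
    + c7 * (x * y) + c8 * (x * z) + c9 * (y * z)
    + c10 * x ^ 3 + c11 * y ^ 3 + c12 * z ^ 3 + c13 * (x * y * z)

theorem mq1 (hv : ∀ x y z : ℝ, v x y z = MP c0 c1 c2 c3 c4 c5 c6 c7 c8 c9 c10 c11 c12 c13 x y z) :
    ∀ x y z : ℝ, qd1 v x y z
      = (c1 + c7 * y + c8 * z + c13 * (y * z)) + 2 * c4 * x + 3 * c10 * x ^ 2 := by
  intro x y z
  have hfun : (fun t => v t y z) = fun t =>
      (c0 + c2 * y + c3 * z + c5 * y ^ 2 + c6 * z ^ 2 + c9 * (y * z) + c11 * y ^ 3 + c12 * z ^ 3)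
      + (c1 + c7 * y + c8 * z + c13 * (y * z)) * t + c4 * t ^ 2 + c10 * t ^ 3 := by
    funext t; rw [hv]; unfold MP; ring
  show deriv (fun t => v t y z) x = _
  rw [hfun, (derivPoly _ _ _ _ x).deriv]

theorem mq2 (hv : ∀ x y z : ℝ, v x y z = MP c0 c1 c2 c3 c4 c5 c6 c7 c8 c9 c10 c11 c12 c13 x y z) :
    ∀ x y z : ℝ, qd2 v x y z
      = (c2 + c7 * x + c9 * z + c13 * (x * z)) + 2 * c5 * y + 3 * c11 * y ^ 2 := by
  intro x y z
  have hfun : (fun t => v x t z) = fun t =>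
      (c0 + c1 * x + c3 * z + c4 * x ^ 2 + c6 * z ^ 2 + c8 * (x * z) + c10 * x ^ 3 + c12 * z ^ 3)
      + (c2 + c7 * x + c9 * z + c13 * (x * z)) * t + c5 * t ^ 2 + c11 * t ^ 3 := by
    funext t; rw [hv]; unfold MP; ring
  show deriv (fun t => v x t z) y = _
  rw [hfun, (derivPoly _ _ _ _ y).deriv]

theorem mq3 (hv : ∀ x y z : ℝ, v x y z = MP c0 c1 c2 c3 c4 c5 c6 c7 c8 c9 c10 c11 c12 c13 x y z) :
    ∀ x y z : ℝ, qd3 v x y z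
      = (c3 + c8 * x + c9 * y + c13 * (x * y)) + 2 * c6 * z + 3 * c12 * z ^ 2 := by
  intro x y z
  have hfun : (fun t => v x y t) = fun t =>
      (c0 + c1 * x + c2 * y + c4 * x ^ 2 + c5 * y ^ 2 + c7 * (x * y) + c10 * x ^ 3 + c11 * y ^ 3)
      + (c3 + c8 * x + c9 * y + c13 * (x * y)) * t + c6 * t ^ 2 + c12 * t ^ 3 := by
    funext t; rw [hv]; unfold MP; ring
  show deriv (fun t => v x y t) z = _
  rw [hfun, (derivPoly _ _ _ _ z).deriv]

theorem mq11 (hv : ∀ x y z : ℝ, v x y z = MP c0 c1 c2 c3 c4 c5 c6 c7 c8 c9 c10 c11 c12 c13 x y z) :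
    ∀ x y z : ℝ, qd1 (qd1 v) x y z = 2 * c4 + 6 * c10 * x := by
  intro x y z
  have hfun : (fun t => qd1 v t y z) = fun t =>
      (c1 + c7 * y + c8 * z + c13 * (y * z)) + (2 * c4) * t + (3 * c10) * t ^ 2 + 0 * t ^ 3 := by
    funext t; rw [mq1 hv]; ring
  show deriv (fun t => qd1 v t y z) x = _
  rw [hfun, (derivPoly _ _ _ _ x).deriv]
  ring

theorem mq22 (hv : ∀ x y z : ℝ, v x y z = MP c0 c1 c2 c3 c4 c5 c6 c7 c8 c9 c10 c11 c12 c13 x y z) :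
    ∀ x y z : ℝ, qd2 (qd2 v) x y z = 2 * c5 + 6 * c11 * y := by
  intro x y z
  have hfun : (fun t => qd2 v x t z) = fun t =>
      (c2 + c7 * x + c9 * z + c13 * (x * z)) + (2 * c5) * t + (3 * c11) * t ^ 2 + 0 * t ^ 3 := by
    funext t; rw [mq2 hv]; ring
  show deriv (fun t => qd2 v x t z) y = _
  rw [hfun, (derivPoly _ _ _ _ y).deriv]
  ring

theorem mq33 (hv : ∀ x y z : ℝ, v x y z = MP c0 c1 c2 c3 c4 c5 c6 c7 c8 c9 c10 c11 c12 c13 x y z) :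
    ∀ x y z : ℝ, qd3 (qd3 v) x y z = 2 * c6 + 6 * c12 * z := by
  intro x y z
  have hfun : (fun t => qd3 v x y t) = fun t =>
      (c3 + c8 * x + c9 * y + c13 * (x * y)) + (2 * c6) * t + (3 * c12) * t ^ 2 + 0 * t ^ 3 := by
    funext t; rw [mq3 hv]; ring
  show deriv (fun t => qd3 v x y t) z = _
  rw [hfun, (derivPoly _ _ _ _ z).deriv]
  ring

theorem mq12 (hv : ∀ x y z : ℝ, v x y z = MP c0 c1 c2 c3 c4 c5 c6 c7 c8 c9 c10 c11 c12 c13 x y z) :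
    ∀ x y z : ℝ, qd1 (qd2 v) x y z = c7 + c13 * z := by
  intro x y z
  have hfun : (fun t => qd2 v t y z) = fun t =>
      (c2 + c9 * z + 2 * c5 * y + 3 * c11 * y ^ 2) + (c7 + c13 * z) * t + 0 * t ^ 2 + 0 * t ^ 3 := by
    funext t; rw [mq2 hv]; ring
  show deriv (fun t => qd2 v t y z) x = _
  rw [hfun, (derivPoly _ _ _ _ x).deriv]
  ring

theorem mq13 (hv : ∀ x y z : ℝ, v x y z = MP c0 c1 c2 c3 c4 c5 c6 c7 c8 c9 c10 c11 c12 c13 x y z) :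
    ∀ x y z : ℝ, qd1 (qd3 v) x y z = c8 + c13 * y := by
  intro x y z
  have hfun : (fun t => qd3 v t y z) = fun t =>
      (c3 + c9 * y + 2 * c6 * z + 3 * c12 * z ^ 2) + (c8 + c13 * y) * t + 0 * t ^ 2 + 0 * t ^ 3 := by
    funext t; rw [mq3 hv]; ring
  show deriv (fun t => qd3 v t y z) x = _
  rw [hfun, (derivPoly _ _ _ _ x).deriv]
  ring

theorem mq23 (hv : ∀ x y z : ℝ, v x y z = MP c0 c1 c2 c3 c4 c5 c6 c7 c8 c9 c10 c11 c12 c13 x y z) :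
    ∀ x y z : ℝ, qd2 (qd3 v) x y z = c9 + c13 * x := by
  intro x y z
  have hfun : (fun t => qd3 v x t z) = fun t =>
      (c3 + c8 * x + 2 * c6 * z + 3 * c12 * z ^ 2) + (c9 + c13 * x) * t + 0 * t ^ 2 + 0 * t ^ 3 := by
    funext t; rw [mq3 hv]; ring
  show deriv (fun t => qd3 v x t z) y = _
  rw [hfun, (derivPoly _ _ _ _ y).deriv]
  ring

theorem mq111 (hv : ∀ x y z : ℝ, v x y z = MP c0 c1 c2 c3 c4 c5 c6 c7 c8 c9 c10 c11 c12 c13 x y z) :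
    qd1 (qd1 (qd1 v)) = fun _ _ _ => 6 * c10 := by
  funext x y z
  have hfun : (fun t => qd1 (qd1 v) t y z) = fun t =>
      (2 * c4) + (6 * c10) * t + 0 * t ^ 2 + 0 * t ^ 3 := by
    funext t; rw [mq11 hv]; ring
  show deriv (fun t => qd1 (qd1 v) t y z) x = _
  rw [hfun, (derivPoly _ _ _ _ x).deriv]
  ring

theorem mq222 (hv : ∀ x y z : ℝ, v x y z = MP c0 c1 c2 c3 c4 c5 c6 c7 c8 c9 c10 c11 c12 c13 x y z) :
    qd2 (qd2 (qd2 v)) = fun _ _ _ => 6 * c11 := by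
  funext x y z
  have hfun : (fun t => qd2 (qd2 v) x t z) = fun t =>
      (2 * c5) + (6 * c11) * t + 0 * t ^ 2 + 0 * t ^ 3 := by
    funext t; rw [mq22 hv]; ring
  show deriv (fun t => qd2 (qd2 v) x t z) y = _
  rw [hfun, (derivPoly _ _ _ _ y).deriv]
  ring

theorem mq333 (hv : ∀ x y z : ℝ, v x y z = MP c0 c1 c2 c3 c4 c5 c6 c7 c8 c9 c10 c11 c12 c13 x y z) :
    qd3 (qd3 (qd3 v)) = fun _ _ _ => 6 * c12 := by
  funext x y z
  have hfun : (fun t => qd3 (qd3 v) x y t) = fun t =>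
      (2 * c6) + (6 * c12) * t + 0 * t ^ 2 + 0 * t ^ 3 := by
    funext t; rw [mq33 hv]; ring
  show deriv (fun t => qd3 (qd3 v) x y t) z = _
  rw [hfun, (derivPoly _ _ _ _ z).deriv]
  ring

theorem vbound (hv : ∀ x y z : ℝ, v x y z = MP c0 c1 c2 c3 c4 c5 c6 c7 c8 c9 c10 c11 c12 c13 x y z) :
    |6 * c10| ≤ semiH2Box v (-1) 1 (-1) 1 (-1) 1 ∧
    |6 * c11| ≤ semiH2Box v (-1) 1 (-1) 1 (-1) 1 ∧
    |6 * c12| ≤ semiH2Box v (-1) 1 (-1) 1 (-1) 1 := by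
  set Pv : ℝ × ℝ × ℝ → ℝ := fun p =>
    (2 * c4 + 6 * c10 * p.1) ^ 2 + (2 * c5 + 6 * c11 * p.2.1) ^ 2
      + (2 * c6 + 6 * c12 * p.2.2) ^ 2 + 2 * (c7 + c13 * p.2.2) ^ 2
      + 2 * (c8 + c13 * p.2.1) ^ 2 + 2 * (c9 + c13 * p.1) ^ 2 with hPv
  have hPc : Continuous Pv := by rw [hPv]; fun_prop
  have hrw : semiH2Box v (-1) 1 (-1) 1 (-1) 1 = Real.sqrt (I3 Pv) := by
    unfold semiH2Box
    congr 1
    simp_rw [mq11 hv, mq22 hv, mq33 hv, mq12 hv, mq13 hv, mq23 hv]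
    rfl
  have key : ∀ Q : ℝ × ℝ × ℝ → ℝ, Continuous Q → (∀ p ∈ Box, Q p ≤ Pv p) →
      ∀ a : ℝ, a ^ 2 ≤ I3 Q → |a| ≤ Real.sqrt (I3 Pv) := by
    intro Q hQc hQP a ha
    exact Real.abs_le_sqrt (le_trans ha (I3_mono hQc hPc hQP))
  refine ⟨?_, ?_, ?_⟩
  · rw [hrw]
    apply key (fun p => (2 * c4 + 6 * c10 * p.1) ^ 2) (by fun_prop)
    · intro p _
      rw [hPv]; dsimp only
      nlinarith [sq_nonneg (2 * c5 + 6 * c11 * p.2.1), sq_nonneg (2 * c6 + 6 * c12 * p.2.2),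
        sq_nonneg (c7 + c13 * p.2.2), sq_nonneg (c8 + c13 * p.2.1), sq_nonneg (c9 + c13 * p.1)]
    · have hval : I3 (fun p : ℝ × ℝ × ℝ => (2 * c4 + 6 * c10 * p.1) ^ 2)
          = 32 * c4 ^ 2 + 96 * c10 ^ 2 := by
        unfold I3
        dsimp only
        simp only [intervalIntegral.integral_const, smul_eq_mul]
        have he : ∀ x : ℝ, (1 - (-1) : ℝ) * ((1 - (-1) : ℝ) * (2 * c4 + 6 * c10 * x) ^ 2)
            = (16 * c4 ^ 2) + (96 * c4 * c10) * x + (144 * c10 ^ 2) * x ^ 2 := by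
          intro x; ring
        simp_rw [he, int_quad]
        ring
      rw [hval]
      nlinarith [sq_nonneg c4, sq_nonneg c10]
  · rw [hrw]
    apply key (fun p => (2 * c5 + 6 * c11 * p.2.1) ^ 2) (by fun_prop)
    · intro p _
      rw [hPv]; dsimp only
      nlinarith [sq_nonneg (2 * c4 + 6 * c10 * p.1), sq_nonneg (2 * c6 + 6 * c12 * p.2.2),
        sq_nonneg (c7 + c13 * p.2.2), sq_nonneg (c8 + c13 * p.2.1), sq_nonneg (c9 + c13 * p.1)]
    · have hval : I3 (fun p : ℝ × ℝ × ℝ => (2 * c5 + 6 * c11 * p.2.1) ^ 2)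
          = 32 * c5 ^ 2 + 96 * c11 ^ 2 := by
        unfold I3
        dsimp only
        simp only [intervalIntegral.integral_const, smul_eq_mul]
        have he : ∀ y : ℝ, (1 - (-1) : ℝ) * (2 * c5 + 6 * c11 * y) ^ 2
            = (8 * c5 ^ 2) + (48 * c5 * c11) * y + (72 * c11 ^ 2) * y ^ 2 := by
          intro y; ring
        simp_rw [he, int_quad]
        ring
      rw [hval]
      nlinarith [sq_nonneg c5, sq_nonneg c11]
  · rw [hrw]
    apply key (fun p => (2 * c6 + 6 * c12 * p.2.2) ^ 2) (by fun_prop)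
    · intro p _
      rw [hPv]; dsimp only
      nlinarith [sq_nonneg (2 * c4 + 6 * c10 * p.1), sq_nonneg (2 * c5 + 6 * c11 * p.2.1),
        sq_nonneg (c7 + c13 * p.2.2), sq_nonneg (c8 + c13 * p.2.1), sq_nonneg (c9 + c13 * p.1)]
    · have hval : I3 (fun p : ℝ × ℝ × ℝ => (2 * c6 + 6 * c12 * p.2.2) ^ 2)
          = 32 * c6 ^ 2 + 96 * c12 ^ 2 := by
        unfold I3
        dsimp only
        have he : ∀ z : ℝ, (2 * c6 + 6 * c12 * z) ^ 2
            = (4 * c6 ^ 2) + (24 * c6 * c12) * z + (36 * c12 ^ 2) * z ^ 2 := by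
          intro z; ring
        simp_rw [he, int_quad]
        simp only [intervalIntegral.integral_const, smul_eq_mul]
        ring
      rw [hval]
      nlinarith [sq_nonneg c6, sq_nonneg c12]
end Morley

noncomputable def FullC (W : ℝ × ℝ × ℝ → ℝ) : ℝ × ℝ × ℝ → ℝ := fun p =>
  (D1 (D1 (D1 (D1 (W)))) (cl3 p)) ^ 2
  + (D2 (D2 (D2 (D2 (W)))) (cl3 p)) ^ 2
  + (D3 (D3 (D3 (D3 (W)))) (cl3 p)) ^ 2
  + 4 * (D1 (D1 (D1 (D2 (W)))) (cl3 p)) ^ 2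
  + 4 * (D1 (D1 (D1 (D3 (W)))) (cl3 p)) ^ 2
  + 4 * (D1 (D2 (D2 (D2 (W)))) (cl3 p)) ^ 2
  + 4 * (D2 (D2 (D2 (D3 (W)))) (cl3 p)) ^ 2
  + 4 * (D1 (D3 (D3 (D3 (W)))) (cl3 p)) ^ 2
  + 4 * (D2 (D3 (D3 (D3 (W)))) (cl3 p)) ^ 2
  + 6 * (D1 (D1 (D2 (D2 (W)))) (cl3 p)) ^ 2
  + 6 * (D1 (D1 (D3 (D3 (W)))) (cl3 p)) ^ 2
  + 6 * (D2 (D2 (D3 (D3 (W)))) (cl3 p)) ^ 2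
  + 12 * (D1 (D1 (D2 (D3 (W)))) (cl3 p)) ^ 2
  + 12 * (D1 (D2 (D2 (D3 (W)))) (cl3 p)) ^ 2
  + 12 * (D1 (D2 (D3 (D3 (W)))) (cl3 p)) ^ 2

theorem dom_aux (a1 a2 a3 a4 a5 a6 a7 a8 a9 a10 a11 a12 a13 a14 a15 : ℝ) :
    a10 ^ 2 ≤ a1 ^ 2 + a2 ^ 2 + a3 ^ 2 + 4 * a4 ^ 2 + 4 * a5 ^ 2 + 4 * a6 ^ 2 + 4 * a7 ^ 2
        + 4 * a8 ^ 2 + 4 * a9 ^ 2 + 6 * a10 ^ 2 + 6 * a11 ^ 2 + 6 * a12 ^ 2 + 12 * a13 ^ 2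
        + 12 * a14 ^ 2 + 12 * a15 ^ 2
      ∧ a11 ^ 2 ≤ a1 ^ 2 + a2 ^ 2 + a3 ^ 2 + 4 * a4 ^ 2 + 4 * a5 ^ 2 + 4 * a6 ^ 2 + 4 * a7 ^ 2
        + 4 * a8 ^ 2 + 4 * a9 ^ 2 + 6 * a10 ^ 2 + 6 * a11 ^ 2 + 6 * a12 ^ 2 + 12 * a13 ^ 2
        + 12 * a14 ^ 2 + 12 * a15 ^ 2
      ∧ a12 ^ 2 ≤ a1 ^ 2 + a2 ^ 2 + a3 ^ 2 + 4 * a4 ^ 2 + 4 * a5 ^ 2 + 4 * a6 ^ 2 + 4 * a7 ^ 2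
        + 4 * a8 ^ 2 + 4 * a9 ^ 2 + 6 * a10 ^ 2 + 6 * a11 ^ 2 + 6 * a12 ^ 2 + 12 * a13 ^ 2
        + 12 * a14 ^ 2 + 12 * a15 ^ 2 := by
  refine ⟨?_, ?_, ?_⟩ <;>
    nlinarith [sq_nonneg a1, sq_nonneg a2, sq_nonneg a3, sq_nonneg a4, sq_nonneg a5,
      sq_nonneg a6, sq_nonneg a7, sq_nonneg a8, sq_nonneg a9, sq_nonneg a10, sq_nonneg a11,
      sq_nonneg a12, sq_nonneg a13, sq_nonneg a14, sq_nonneg a15]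

/-- Continuity bound for the functional `B₄` on the reference cube. -/
theorem stmt_18 :
    ∃ C > (0:ℝ), ∀ u v : ℝ → ℝ → ℝ → ℝ,
      C4Near3 u (-1) 1 (-1) 1 (-1) 1 → MorleyShape3 v →
      |B4 u v| ≤ C * semiH4Box u (-1) 1 (-1) 1 (-1) 1 * semiH2Box v (-1) 1 (-1) 1 (-1) 1 := by
  refine ⟨12, by norm_num, ?_⟩
  rintro u v ⟨U, hU, hBUraw, hWc⟩ ⟨c0, c1, c2, c3, c4, c5, c6, c7, c8, c9, c10, c11, c12, c13, hv⟩
  set W : ℝ × ℝ × ℝ → ℝ := fun p => u p.1 p.2.1 p.2.2 with hWdef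
  have hW : ContDiffOn ℝ 4 W U := hWc
  have hBU : Box ⊆ U := hBUraw
  have hv' : ∀ x y z : ℝ, v x y z = MP c0 c1 c2 c3 c4 c5 c6 c7 c8 c9 c10 c11 c12 c13 x y z := hv
  have hg0 : ∀ x y z : ℝ, (x, y, z) ∈ U → u x y z = W (x, y, z) := fun _ _ _ _ => rfl
  have b1 := qd1_eq hU hW (by norm_num) hg0
  have b2 := qd2_eq hU hW (by norm_num) hg0
  have b3 := qd3_eq hU hW (by norm_num) hg0
  have w1 : ContDiffOn ℝ 3 (D1 (W)) U := smoothD1 hU hW (by norm_num)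
  have w2 : ContDiffOn ℝ 3 (D2 (W)) U := smoothD2 hU hW (by norm_num)
  have w3 : ContDiffOn ℝ 3 (D3 (W)) U := smoothD3 hU hW (by norm_num)
  have w11 : ContDiffOn ℝ 2 (D1 (D1 (W))) U := smoothD1 hU w1 (by norm_num)
  have w22 : ContDiffOn ℝ 2 (D2 (D2 (W))) U := smoothD2 hU w2 (by norm_num)
  have w33 : ContDiffOn ℝ 2 (D3 (D3 (W))) U := smoothD3 hU w3 (by norm_num)
  have w12 : ContDiffOn ℝ 2 (D1 (D2 (W))) U := smoothD1 hU w2 (by norm_num)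
  have w13 : ContDiffOn ℝ 2 (D1 (D3 (W))) U := smoothD1 hU w3 (by norm_num)
  have w23 : ContDiffOn ℝ 2 (D2 (D3 (W))) U := smoothD2 hU w3 (by norm_num)
  have w111 : ContDiffOn ℝ 1 (D1 (D1 (D1 (W)))) U := smoothD1 hU w11 (by norm_num)
  have w222 : ContDiffOn ℝ 1 (D2 (D2 (D2 (W)))) U := smoothD2 hU w22 (by norm_num)
  have w333 : ContDiffOn ℝ 1 (D3 (D3 (D3 (W)))) U := smoothD3 hU w33 (by norm_num)
  have w112 : ContDiffOn ℝ 1 (D1 (D1 (D2 (W)))) U := smoothD1 hU w12 (by norm_num)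
  have w113 : ContDiffOn ℝ 1 (D1 (D1 (D3 (W)))) U := smoothD1 hU w13 (by norm_num)
  have w223 : ContDiffOn ℝ 1 (D2 (D2 (D3 (W)))) U := smoothD2 hU w23 (by norm_num)
  have w122 : ContDiffOn ℝ 1 (D1 (D2 (D2 (W)))) U := smoothD1 hU w22 (by norm_num)
  have w133 : ContDiffOn ℝ 1 (D1 (D3 (D3 (W)))) U := smoothD1 hU w33 (by norm_num)
  have w233 : ContDiffOn ℝ 1 (D2 (D3 (D3 (W)))) U := smoothD2 hU w33 (by norm_num)
  have w123 : ContDiffOn ℝ 1 (D1 (D2 (D3 (W)))) U := smoothD1 hU w23 (by norm_num)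
  have b11 := qd1_eq hU w1 (by norm_num) b1
  have b22 := qd2_eq hU w2 (by norm_num) b2
  have b33 := qd3_eq hU w3 (by norm_num) b3
  have b12 := qd1_eq hU w2 (by norm_num) b2
  have b13 := qd1_eq hU w3 (by norm_num) b3
  have b23 := qd2_eq hU w3 (by norm_num) b3
  have b111 := qd1_eq hU w11 (by norm_num) b11
  have b222 := qd2_eq hU w22 (by norm_num) b22
  have b333 := qd3_eq hU w33 (by norm_num) b33
  have b112 := qd1_eq hU w12 (by norm_num) b12
  have b113 := qd1_eq hU w13 (by norm_num) b13
  have b223 := qd2_eq hU w23 (by norm_num) b23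
  have b122 := qd1_eq hU w22 (by norm_num) b22
  have b133 := qd1_eq hU w33 (by norm_num) b33
  have b233 := qd2_eq hU w33 (by norm_num) b33
  have b123 := qd1_eq hU w23 (by norm_num) b23
  have b1111 := qd1_eq hU w111 (by norm_num) b111
  have b2222 := qd2_eq hU w222 (by norm_num) b222
  have b3333 := qd3_eq hU w333 (by norm_num) b333
  have b1112 := qd1_eq hU w112 (by norm_num) b112
  have b1113 := qd1_eq hU w113 (by norm_num) b113
  have b1222 := qd1_eq hU w222 (by norm_num) b222
  have b2223 := qd2_eq hU w223 (by norm_num) b223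
  have b1333 := qd1_eq hU w333 (by norm_num) b333
  have b2333 := qd2_eq hU w333 (by norm_num) b333
  have b1122 := qd1_eq hU w122 (by norm_num) b122
  have b1133 := qd1_eq hU w133 (by norm_num) b133
  have b2233 := qd2_eq hU w233 (by norm_num) b233
  have b1123 := qd1_eq hU w123 (by norm_num) b123
  have b1223 := qd1_eq hU w223 (by norm_num) b223
  have b1233 := qd1_eq hU w233 (by norm_num) b233
  have sw2 : ∀ p ∈ U, D2 (D1 (D1 (D2 (W)))) p = D1 (D1 (D2 (D2 (W)))) p := by
    intro p hp
    have s1 : D2 (D1 (D1 (D2 (W)))) p = D1 (D2 (D1 (D2 (W)))) p :=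
      (swapD12 hU w12 le_rfl hp).symm
    have s2 : ∀ q ∈ U, D2 (D1 (D2 (W))) q = D1 (D2 (D2 (W))) q :=
      fun q hq => (swapD12 hU w2 (by norm_num) hq).symm
    exact s1.trans (D1_congr hU s2 hp)
  have sw3a : ∀ p ∈ U, D3 (D1 (D1 (D3 (W)))) p = D1 (D1 (D3 (D3 (W)))) p := by
    intro p hp
    have s1 : D3 (D1 (D1 (D3 (W)))) p = D1 (D3 (D1 (D3 (W)))) p :=
      (swapD13 hU w13 le_rfl hp).symm
    have s2 : ∀ q ∈ U, D3 (D1 (D3 (W))) q = D1 (D3 (D3 (W))) q :=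
      fun q hq => (swapD13 hU w3 (by norm_num) hq).symm
    exact s1.trans (D1_congr hU s2 hp)
  have sw3b : ∀ p ∈ U, D3 (D2 (D2 (D3 (W)))) p = D2 (D2 (D3 (D3 (W)))) p := by
    intro p hp
    have s1 : D3 (D2 (D2 (D3 (W)))) p = D2 (D3 (D2 (D3 (W)))) p :=
      (swapD23 hU w23 le_rfl hp).symm
    have s2 : ∀ q ∈ U, D3 (D2 (D3 (W))) q = D2 (D3 (D3 (W))) q :=
      fun q hq => (swapD23 hU w3 (by norm_num) hq).symm
    exact s1.trans (D2_congr hU s2 hp)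
  set A1 : ℝ × ℝ × ℝ → ℝ := fun p => D1 (D2 (D2 (W))) p + D1 (D3 (D3 (W))) p with hA1def
  set A2 : ℝ × ℝ × ℝ → ℝ := fun p => D1 (D1 (D2 (W))) p + D2 (D3 (D3 (W))) p with hA2def
  set A3 : ℝ × ℝ × ℝ → ℝ := fun p => D1 (D1 (D3 (W))) p + D2 (D2 (D3 (W))) p with hA3def
  have hA1 : ContDiffOn ℝ 1 A1 U := w122.add w133
  have hA2 : ContDiffOn ℝ 1 A2 U := w112.add w233
  have hA3 : ContDiffOn ℝ 1 A3 U := w113.add w223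
  have dA1 : ∀ p ∈ U, D1 A1 p = D1 (D1 (D2 (D2 (W)))) p + D1 (D1 (D3 (D3 (W)))) p :=
    fun p hp => D1_add hU w122 w133 le_rfl hp
  have dA2 : ∀ p ∈ U, D2 A2 p = D1 (D1 (D2 (D2 (W)))) p + D2 (D2 (D3 (D3 (W)))) p := by
    intro p hp
    rw [D2_add hU w112 w233 le_rfl hp, sw2 p hp]
  have dA3 : ∀ p ∈ U, D3 A3 p = D1 (D1 (D3 (D3 (W)))) p + D2 (D2 (D3 (D3 (W)))) p := by
    intro p hp
    rw [D3_add hU w113 w223 le_rfl hp, sw3a p hp, sw3b p hp]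
  set S4 : ℝ := semiH4Box u (-1) 1 (-1) 1 (-1) 1 with hS4def
  set S2 : ℝ := semiH2Box v (-1) 1 (-1) 1 (-1) 1 with hS2def
  have hS4nn : (0:ℝ) ≤ S4 := Real.sqrt_nonneg _
  have hS2nn : (0:ℝ) ≤ S2 := Real.sqrt_nonneg _
  set R4 : ℝ × ℝ × ℝ → ℝ := fun p : ℝ × ℝ × ℝ =>
      (qd1 (qd1 (qd1 (qd1 (u)))) p.1 p.2.1 p.2.2) ^ 2
      + (qd2 (qd2 (qd2 (qd2 (u)))) p.1 p.2.1 p.2.2) ^ 2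
      + (qd3 (qd3 (qd3 (qd3 (u)))) p.1 p.2.1 p.2.2) ^ 2
      + 4 * (qd1 (qd1 (qd1 (qd2 (u)))) p.1 p.2.1 p.2.2) ^ 2
      + 4 * (qd1 (qd1 (qd1 (qd3 (u)))) p.1 p.2.1 p.2.2) ^ 2
      + 4 * (qd1 (qd2 (qd2 (qd2 (u)))) p.1 p.2.1 p.2.2) ^ 2
      + 4 * (qd2 (qd2 (qd2 (qd3 (u)))) p.1 p.2.1 p.2.2) ^ 2
      + 4 * (qd1 (qd3 (qd3 (qd3 (u)))) p.1 p.2.1 p.2.2) ^ 2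
      + 4 * (qd2 (qd3 (qd3 (qd3 (u)))) p.1 p.2.1 p.2.2) ^ 2
      + 6 * (qd1 (qd1 (qd2 (qd2 (u)))) p.1 p.2.1 p.2.2) ^ 2
      + 6 * (qd1 (qd1 (qd3 (qd3 (u)))) p.1 p.2.1 p.2.2) ^ 2
      + 6 * (qd2 (qd2 (qd3 (qd3 (u)))) p.1 p.2.1 p.2.2) ^ 2
      + 12 * (qd1 (qd1 (qd2 (qd3 (u)))) p.1 p.2.1 p.2.2) ^ 2
      + 12 * (qd1 (qd2 (qd2 (qd3 (u)))) p.1 p.2.1 p.2.2) ^ 2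
      + 12 * (qd1 (qd2 (qd3 (qd3 (u)))) p.1 p.2.1 p.2.2) ^ 2 with hR4def
  have hR4nn : (0:ℝ) ≤ I3 R4 := by
    apply I3_nonneg
    intro p _
    rw [hR4def]
    positivity
  have hbridge4 : ∀ p ∈ Box, R4 p = FullC W p := by
    rintro ⟨x, y, z⟩ hp
    have hp' := hBU hp
    rw [hR4def]
    unfold FullC
    dsimp only
    rw [cl3_eq hp]
    rw [b1111 x y z hp', b2222 x y z hp', b3333 x y z hp', b1112 x y z hp', b1113 x y z hp', b1222 x y z hp', b2223 x y z hp', b1333 x y z hp', b2333 x y z hp', b1122 x y z hp', b1133 x y z hp', b2233 x y z hp', b1123 x y z hp', b1223 x y z hp', b1233 x y z hp']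
  have hS4sq : S4 ^ 2 = I3 (FullC W) := by
    calc S4 ^ 2 = I3 R4 := by
          rw [hS4def]
          unfold semiH4Box
          exact Real.sq_sqrt hR4nn
    _ = I3 (FullC W) := I3_congr hbridge4
  have cc1111 : Continuous fun p => D1 (D1 (D1 (D1 (W)))) (cl3 p) :=
    clamp_cont (smoothD1 (m := 0) hU w111 (by norm_num)).continuousOn hBU
  have cc2222 : Continuous fun p => D2 (D2 (D2 (D2 (W)))) (cl3 p) :=
    clamp_cont (smoothD2 (m := 0) hU w222 (by norm_num)).continuousOn hBU
  have cc3333 : Continuous fun p => D3 (D3 (D3 (D3 (W)))) (cl3 p) :=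
    clamp_cont (smoothD3 (m := 0) hU w333 (by norm_num)).continuousOn hBU
  have cc1112 : Continuous fun p => D1 (D1 (D1 (D2 (W)))) (cl3 p) :=
    clamp_cont (smoothD1 (m := 0) hU w112 (by norm_num)).continuousOn hBU
  have cc1113 : Continuous fun p => D1 (D1 (D1 (D3 (W)))) (cl3 p) :=
    clamp_cont (smoothD1 (m := 0) hU w113 (by norm_num)).continuousOn hBU
  have cc1222 : Continuous fun p => D1 (D2 (D2 (D2 (W)))) (cl3 p) :=
    clamp_cont (smoothD1 (m := 0) hU w222 (by norm_num)).continuousOn hBU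
  have cc2223 : Continuous fun p => D2 (D2 (D2 (D3 (W)))) (cl3 p) :=
    clamp_cont (smoothD2 (m := 0) hU w223 (by norm_num)).continuousOn hBU
  have cc1333 : Continuous fun p => D1 (D3 (D3 (D3 (W)))) (cl3 p) :=
    clamp_cont (smoothD1 (m := 0) hU w333 (by norm_num)).continuousOn hBU
  have cc2333 : Continuous fun p => D2 (D3 (D3 (D3 (W)))) (cl3 p) :=
    clamp_cont (smoothD2 (m := 0) hU w333 (by norm_num)).continuousOn hBU
  have cc1122 : Continuous fun p => D1 (D1 (D2 (D2 (W)))) (cl3 p) :=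
    clamp_cont (smoothD1 (m := 0) hU w122 (by norm_num)).continuousOn hBU
  have cc1133 : Continuous fun p => D1 (D1 (D3 (D3 (W)))) (cl3 p) :=
    clamp_cont (smoothD1 (m := 0) hU w133 (by norm_num)).continuousOn hBU
  have cc2233 : Continuous fun p => D2 (D2 (D3 (D3 (W)))) (cl3 p) :=
    clamp_cont (smoothD2 (m := 0) hU w233 (by norm_num)).continuousOn hBU
  have cc1123 : Continuous fun p => D1 (D1 (D2 (D3 (W)))) (cl3 p) :=
    clamp_cont (smoothD1 (m := 0) hU w123 (by norm_num)).continuousOn hBU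
  have cc1223 : Continuous fun p => D1 (D2 (D2 (D3 (W)))) (cl3 p) :=
    clamp_cont (smoothD1 (m := 0) hU w223 (by norm_num)).continuousOn hBU
  have cc1233 : Continuous fun p => D1 (D2 (D3 (D3 (W)))) (cl3 p) :=
    clamp_cont (smoothD1 (m := 0) hU w233 (by norm_num)).continuousOn hBU
  have hFullCc : Continuous (FullC W) := by
    unfold FullC
    exact ((((((((((((((cc1111.pow 2).add (cc2222.pow 2)).add (cc3333.pow 2)).add (continuous_const.mul (cc1112.pow 2))).add (continuous_const.mul (cc1113.pow 2))).add (continuous_const.mul (cc1222.pow 2))).add (continuous_const.mul (cc2223.pow 2))).add (continuous_const.mul (cc1333.pow 2))).add (continuous_const.mul (cc2333.pow 2))).add (continuous_const.mul (cc1122.pow 2))).add (continuous_const.mul (cc1133.pow 2))).add (continuous_const.mul (cc2233.pow 2))).add (continuous_const.mul (cc1123.pow 2))).add (continuous_const.mul (cc1223.pow 2))).add (continuous_const.mul (cc1233.pow 2))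
  have key4 : ∀ ch : ℝ × ℝ × ℝ → ℝ, Continuous (fun p => ch (cl3 p)) →
      (∀ p ∈ Box, (ch (cl3 p)) ^ 2 ≤ FullC W p) → I3 (fun p => |ch (cl3 p)|) ≤ 3 * S4 := by
    intro ch hc hle
    have h1 : (I3 fun p => |ch (cl3 p)|) ^ 2 ≤ 8 * I3 fun p => |ch (cl3 p)| ^ 2 := CS3 hc.abs
    have h2 : (I3 fun p => |ch (cl3 p)| ^ 2) = I3 fun p => (ch (cl3 p)) ^ 2 := by
      simp only [sq_abs]
    have h3 : (I3 fun p => (ch (cl3 p)) ^ 2) ≤ I3 (FullC W) := I3_mono (hc.pow 2) hFullCc hle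
    have h4 : (0:ℝ) ≤ I3 fun p => |ch (cl3 p)| := I3_nonneg (fun p _ => abs_nonneg _)
    nlinarith [hS4sq, hS4nn]
  have dom1122 : ∀ p ∈ Box, (D1 (D1 (D2 (D2 (W)))) (cl3 p)) ^ 2 ≤ FullC W p := by
    intro p _
    unfold FullC
    exact (dom_aux _ _ _ _ _ _ _ _ _ _ _ _ _ _ _).1
  have dom1133 : ∀ p ∈ Box, (D1 (D1 (D3 (D3 (W)))) (cl3 p)) ^ 2 ≤ FullC W p := by
    intro p _
    unfold FullC
    exact (dom_aux _ _ _ _ _ _ _ _ _ _ _ _ _ _ _).2.1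
  have dom2233 : ∀ p ∈ Box, (D2 (D2 (D3 (D3 (W)))) (cl3 p)) ^ 2 ≤ FullC W p := by
    intro p _
    unfold FullC
    exact (dom_aux _ _ _ _ _ _ _ _ _ _ _ _ _ _ _).2.2
  have k1122 : I3 (fun p => |D1 (D1 (D2 (D2 (W)))) (cl3 p)|) ≤ 3 * S4 := key4 _ cc1122 dom1122
  have k1133 : I3 (fun p => |D1 (D1 (D3 (D3 (W)))) (cl3 p)|) ≤ 3 * S4 := key4 _ cc1133 dom1133
  have k2233 : I3 (fun p => |D2 (D2 (D3 (D3 (W)))) (cl3 p)|) ≤ 3 * S4 := key4 _ cc2233 dom2233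
  have hDA1c : Continuous fun p => D1 A1 (cl3 p) :=
    clamp_cont (smoothD1 (m := 0) hU hA1 (by norm_num)).continuousOn hBU
  have bd1 : I3 (fun p => |D1 A1 (cl3 p)|) ≤ 6 * S4 := by
    have hm : I3 (fun p => |D1 A1 (cl3 p)|)
        ≤ I3 (fun p => |D1 (D1 (D2 (D2 (W)))) (cl3 p)| + |D1 (D1 (D3 (D3 (W)))) (cl3 p)|) := by
      apply I3_mono hDA1c.abs (cc1122.abs.add cc1133.abs)
      intro p _
      rw [dA1 (cl3 p) (hBU (cl3_mem p))]
      exact abs_add_le _ _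
    rw [I3_add cc1122.abs cc1133.abs] at hm
    linarith [k1122, k1133]
  have hDA2c : Continuous fun p => D2 A2 (cl3 p) :=
    clamp_cont (smoothD2 (m := 0) hU hA2 (by norm_num)).continuousOn hBU
  have bd2 : I3 (fun p => |D2 A2 (cl3 p)|) ≤ 6 * S4 := by
    have hm : I3 (fun p => |D2 A2 (cl3 p)|)
        ≤ I3 (fun p => |D1 (D1 (D2 (D2 (W)))) (cl3 p)| + |D2 (D2 (D3 (D3 (W)))) (cl3 p)|) := by
      apply I3_mono hDA2c.abs (cc1122.abs.add cc2233.abs)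
      intro p _
      rw [dA2 (cl3 p) (hBU (cl3_mem p))]
      exact abs_add_le _ _
    rw [I3_add cc1122.abs cc2233.abs] at hm
    linarith [k1122, k2233]
  have hDA3c : Continuous fun p => D3 A3 (cl3 p) :=
    clamp_cont (smoothD3 (m := 0) hU hA3 (by norm_num)).continuousOn hBU
  have bd3 : I3 (fun p => |D3 A3 (cl3 p)|) ≤ 6 * S4 := by
    have hm : I3 (fun p => |D3 A3 (cl3 p)|)
        ≤ I3 (fun p => |D1 (D1 (D3 (D3 (W)))) (cl3 p)| + |D2 (D2 (D3 (D3 (W)))) (cl3 p)|) := by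
      apply I3_mono hDA3c.abs (cc1133.abs.add cc2233.abs)
      intro p _
      rw [dA3 (cl3 p) (hBU (cl3_mem p))]
      exact abs_add_le _ _
    rw [I3_add cc1133.abs cc2233.abs] at hm
    linarith [k1133, k2233]
  have cb1 := comp_bound1 hU hBU hA1 le_rfl
  have cb2 := comp_bound2 hU hBU hA2 le_rfl
  have cb3 := comp_bound3 hU hBU hA3 le_rfl
  have hT1 : |1/3 * I3 (fun p => A1 (cl3 p))
      - 2/3 * (∫ s in (-1:ℝ)..1, ∫ t in (-1:ℝ)..1, A1 (cl3 (1, s, t)))| ≤ 4 * S4 := by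
    refine le_trans cb1 ?_
    linarith [bd1]
  have hT2 : |1/3 * I3 (fun p => A2 (cl3 p))
      - 2/3 * (∫ s in (-1:ℝ)..1, ∫ t in (-1:ℝ)..1, A2 (cl3 (s, 1, t)))| ≤ 4 * S4 := by
    refine le_trans cb2 ?_
    linarith [bd2]
  have hT3 : |1/3 * I3 (fun p => A3 (cl3 p))
      - 2/3 * (∫ s in (-1:ℝ)..1, ∫ t in (-1:ℝ)..1, A3 (cl3 (s, t, 1)))| ≤ 4 * S4 := by
    refine le_trans cb3 ?_
    linarith [bd3]
  obtain ⟨hc10, hc11, hc12⟩ := vbound hv'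
  rw [← hS2def] at hc10 hc11 hc12
  have hB4raw : B4 u v = 1/3 * (∫ x in (-1:ℝ)..1, ∫ y in (-1:ℝ)..1, ∫ z in (-1:ℝ)..1,
      (qd1 (qd2 (qd2 (u))) x y z + qd1 (qd3 (qd3 (u))) x y z) * (6 * c10)
        + (qd1 (qd1 (qd2 (u))) x y z + qd2 (qd3 (qd3 (u))) x y z) * (6 * c11)
        + (qd1 (qd1 (qd3 (u))) x y z + qd2 (qd2 (qd3 (u))) x y z) * (6 * c12))
      - 1/12 * (∫ x in (-1:ℝ)..1, ∫ y in (-1:ℝ)..1, ∫ z in (-1:ℝ)..1,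
      (∫ s in (-1:ℝ)..1, ∫ t in (-1:ℝ)..1,
              qd1 (qd2 (qd2 (u))) 1 s t + qd1 (qd3 (qd3 (u))) 1 s t)
          * (6 * c10)
        + (∫ s in (-1:ℝ)..1, ∫ t in (-1:ℝ)..1,
              qd1 (qd1 (qd2 (u))) s 1 t + qd2 (qd3 (qd3 (u))) s 1 t)
          * (6 * c11)
        + (∫ s in (-1:ℝ)..1, ∫ t in (-1:ℝ)..1,
              qd1 (qd1 (qd3 (u))) s t 1 + qd2 (qd2 (qd3 (u))) s t 1)
          * (6 * c12)) := by
    unfold B4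
    simp only [mq111 hv', mq222 hv', mq333 hv']
  have hA1c : Continuous fun p => A1 (cl3 p) := clamp_cont hA1.continuousOn hBU
  have hA2c : Continuous fun p => A2 (cl3 p) := clamp_cont hA2.continuousOn hBU
  have hA3c : Continuous fun p => A3 (cl3 p) := clamp_cont hA3.continuousOn hBU
  have hVol : (∫ x in (-1:ℝ)..1, ∫ y in (-1:ℝ)..1, ∫ z in (-1:ℝ)..1,
      (qd1 (qd2 (qd2 (u))) x y z + qd1 (qd3 (qd3 (u))) x y z) * (6 * c10)
        + (qd1 (qd1 (qd2 (u))) x y z + qd2 (qd3 (qd3 (u))) x y z) * (6 * c11)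
        + (qd1 (qd1 (qd3 (u))) x y z + qd2 (qd2 (qd3 (u))) x y z) * (6 * c12))
      = I3 (fun p => A1 (cl3 p)) * (6 * c10) + I3 (fun p => A2 (cl3 p)) * (6 * c11)
        + I3 (fun p => A3 (cl3 p)) * (6 * c12) := by
    have hpt : ∀ p ∈ Box,
        (qd1 (qd2 (qd2 (u))) p.1 p.2.1 p.2.2 + qd1 (qd3 (qd3 (u))) p.1 p.2.1 p.2.2) * (6 * c10)
          + (qd1 (qd1 (qd2 (u))) p.1 p.2.1 p.2.2 + qd2 (qd3 (qd3 (u))) p.1 p.2.1 p.2.2) * (6 * c11)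
          + (qd1 (qd1 (qd3 (u))) p.1 p.2.1 p.2.2 + qd2 (qd2 (qd3 (u))) p.1 p.2.1 p.2.2) * (6 * c12)
        = A1 (cl3 p) * (6 * c10) + A2 (cl3 p) * (6 * c11) + A3 (cl3 p) * (6 * c12) := by
      rintro ⟨x, y, z⟩ hp
      have hp' := hBU hp
      dsimp only
      rw [cl3_eq hp]
      simp only [hA1def, hA2def, hA3def]
      rw [b122 x y z hp', b133 x y z hp', b112 x y z hp', b233 x y z hp',
        b113 x y z hp', b223 x y z hp']
    have hcongr := I3_congr hpt
    have hsplit : I3 (fun p => A1 (cl3 p) * (6 * c10) + A2 (cl3 p) * (6 * c11)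
        + A3 (cl3 p) * (6 * c12))
        = I3 (fun p => A1 (cl3 p)) * (6 * c10) + I3 (fun p => A2 (cl3 p)) * (6 * c11)
          + I3 (fun p => A3 (cl3 p)) * (6 * c12) := by
      rw [I3_add (F := fun p => A1 (cl3 p) * (6 * c10) + A2 (cl3 p) * (6 * c11))
        (G := fun p => A3 (cl3 p) * (6 * c12)) ((hA1c.mul continuous_const).add (hA2c.mul continuous_const))
        (hA3c.mul continuous_const),
        I3_add (F := fun p => A1 (cl3 p) * (6 * c10)) (G := fun p => A2 (cl3 p) * (6 * c11))
          (hA1c.mul continuous_const) (hA2c.mul continuous_const),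
        I3_mul_const, I3_mul_const, I3_mul_const]
    exact hcongr.trans hsplit
  have hK1 : (∫ s in (-1:ℝ)..1, ∫ t in (-1:ℝ)..1,
        qd1 (qd2 (qd2 (u))) 1 s t + qd1 (qd3 (qd3 (u))) 1 s t)
      = ∫ s in (-1:ℝ)..1, ∫ t in (-1:ℝ)..1, A1 (cl3 (1, s, t)) := by
    apply integral_congr
    intro s hs
    rw [Set.uIcc_of_le (by norm_num : (-1:ℝ) ≤ 1)] at hs
    apply integral_congr
    intro t ht
    rw [Set.uIcc_of_le (by norm_num : (-1:ℝ) ≤ 1)] at ht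
    have hm : ((1:ℝ), s, t) ∈ Box := mem_Box.2 ⟨⟨by norm_num, le_rfl⟩, hs, ht⟩
    have hp' := hBU hm
    dsimp only
    rw [cl3_eq hm]
    simp only [hA1def]
    rw [b122 1 s t hp', b133 1 s t hp']
  have hK2 : (∫ s in (-1:ℝ)..1, ∫ t in (-1:ℝ)..1,
        qd1 (qd1 (qd2 (u))) s 1 t + qd2 (qd3 (qd3 (u))) s 1 t)
      = ∫ s in (-1:ℝ)..1, ∫ t in (-1:ℝ)..1, A2 (cl3 (s, 1, t)) := by
    apply integral_congr
    intro s hs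
    rw [Set.uIcc_of_le (by norm_num : (-1:ℝ) ≤ 1)] at hs
    apply integral_congr
    intro t ht
    rw [Set.uIcc_of_le (by norm_num : (-1:ℝ) ≤ 1)] at ht
    have hm : (s, (1:ℝ), t) ∈ Box := mem_Box.2 ⟨hs, ⟨by norm_num, le_rfl⟩, ht⟩
    have hp' := hBU hm
    dsimp only
    rw [cl3_eq hm]
    simp only [hA2def]
    rw [b112 s 1 t hp', b233 s 1 t hp']
  have hK3 : (∫ s in (-1:ℝ)..1, ∫ t in (-1:ℝ)..1,
        qd1 (qd1 (qd3 (u))) s t 1 + qd2 (qd2 (qd3 (u))) s t 1)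
      = ∫ s in (-1:ℝ)..1, ∫ t in (-1:ℝ)..1, A3 (cl3 (s, t, 1)) := by
    apply integral_congr
    intro s hs
    rw [Set.uIcc_of_le (by norm_num : (-1:ℝ) ≤ 1)] at hs
    apply integral_congr
    intro t ht
    rw [Set.uIcc_of_le (by norm_num : (-1:ℝ) ≤ 1)] at ht
    have hm : (s, t, (1:ℝ)) ∈ Box := mem_Box.2 ⟨hs, ht, ⟨by norm_num, le_rfl⟩⟩
    have hp' := hBU hm
    dsimp only
    rw [cl3_eq hm]
    simp only [hA3def]
    rw [b113 s t 1 hp', b223 s t 1 hp']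
  have hFace : (∫ x in (-1:ℝ)..1, ∫ y in (-1:ℝ)..1, ∫ z in (-1:ℝ)..1,
      (∫ s in (-1:ℝ)..1, ∫ t in (-1:ℝ)..1,
              qd1 (qd2 (qd2 (u))) 1 s t + qd1 (qd3 (qd3 (u))) 1 s t)
          * (6 * c10)
        + (∫ s in (-1:ℝ)..1, ∫ t in (-1:ℝ)..1,
              qd1 (qd1 (qd2 (u))) s 1 t + qd2 (qd3 (qd3 (u))) s 1 t)
          * (6 * c11)
        + (∫ s in (-1:ℝ)..1, ∫ t in (-1:ℝ)..1,
              qd1 (qd1 (qd3 (u))) s t 1 + qd2 (qd2 (qd3 (u))) s t 1)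
          * (6 * c12))
      = 8 * ((∫ s in (-1:ℝ)..1, ∫ t in (-1:ℝ)..1, A1 (cl3 (1, s, t))) * (6 * c10)
        + (∫ s in (-1:ℝ)..1, ∫ t in (-1:ℝ)..1, A2 (cl3 (s, 1, t))) * (6 * c11)
        + (∫ s in (-1:ℝ)..1, ∫ t in (-1:ℝ)..1, A3 (cl3 (s, t, 1))) * (6 * c12)) := by
    simp only [hK1, hK2, hK3, intervalIntegral.integral_const, smul_eq_mul]
    ring
  have hB4 : B4 u v
      = (6 * c10) * (1/3 * I3 (fun p => A1 (cl3 p))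
          - 2/3 * (∫ s in (-1:ℝ)..1, ∫ t in (-1:ℝ)..1, A1 (cl3 (1, s, t))))
        + (6 * c11) * (1/3 * I3 (fun p => A2 (cl3 p))
          - 2/3 * (∫ s in (-1:ℝ)..1, ∫ t in (-1:ℝ)..1, A2 (cl3 (s, 1, t))))
        + (6 * c12) * (1/3 * I3 (fun p => A3 (cl3 p))
          - 2/3 * (∫ s in (-1:ℝ)..1, ∫ t in (-1:ℝ)..1, A3 (cl3 (s, t, 1)))) := by
    rw [hB4raw, hVol, hFace]
    ring
  rw [hB4]
  have e1 : |(6 * c10) * (1/3 * I3 (fun p => A1 (cl3 p))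
      - 2/3 * (∫ s in (-1:ℝ)..1, ∫ t in (-1:ℝ)..1, A1 (cl3 (1, s, t))))| ≤ S2 * (4 * S4) := by
    rw [abs_mul]
    exact mul_le_mul hc10 hT1 (abs_nonneg _) hS2nn
  have e2 : |(6 * c11) * (1/3 * I3 (fun p => A2 (cl3 p))
      - 2/3 * (∫ s in (-1:ℝ)..1, ∫ t in (-1:ℝ)..1, A2 (cl3 (s, 1, t))))| ≤ S2 * (4 * S4) := by
    rw [abs_mul]
    exact mul_le_mul hc11 hT2 (abs_nonneg _) hS2nn
  have e3 : |(6 * c12) * (1/3 * I3 (fun p => A3 (cl3 p))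
      - 2/3 * (∫ s in (-1:ℝ)..1, ∫ t in (-1:ℝ)..1, A3 (cl3 (s, t, 1))))| ≤ S2 * (4 * S4) := by
    rw [abs_mul]
    exact mul_le_mul hc12 hT3 (abs_nonneg _) hS2nn
  calc |_ + _ + _| ≤ _ := abs_add_le _ _
  _ ≤ S2 * (4 * S4) + S2 * (4 * S4) + S2 * (4 * S4) := by
    have := abs_add_le ((6 * c10) * (1/3 * I3 (fun p => A1 (cl3 p))
      - 2/3 * (∫ s in (-1:ℝ)..1, ∫ t in (-1:ℝ)..1, A1 (cl3 (1, s, t)))))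
      ((6 * c11) * (1/3 * I3 (fun p => A2 (cl3 p))
      - 2/3 * (∫ s in (-1:ℝ)..1, ∫ t in (-1:ℝ)..1, A2 (cl3 (s, 1, t)))))
    linarith [e1, e2, e3]
  _ = 12 * S4 * S2 := by ring
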